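/- Let G be a finite group, let R be a Cayley subset of G, and suppose Γ := Cay(G,R) is a GRR for G. Then |Γ[R]_I| ≤ 1 or |Γᶜ[Rᶜ]_I| ≤ 1. Moreover, if |G| > 2, then either G = ⟨R ∖ Γ[R]_I⟩ and |Γ[R]_I| ≤ 1, or G = ⟨Rᶜ ∖ Γᶜ[Rᶜ]_I⟩ and |Γᶜ[Rᶜ]_I| ≤ 1. -/

import Mathlib

/-- A permutation `σ` of the vertex set is an automorphism of the simple graph `Γ`. -/
def IsGraphAut {V : Type*} (Γ : SimpleGraph V) (σ : Equiv.Perm V) : Prop :=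
  ∀ u v : V, Γ.Adj (σ u) (σ v) ↔ Γ.Adj u v

/-- The Cayley graph `Cay(G,R)`: `g` and `h` are adjacent iff `h * g⁻¹ ∈ R`
(for a Cayley subset `R`, i.e. `1 ∉ R = R⁻¹`). -/
def Cay (G : Type*) [Group G] (R : Set G) : SimpleGraph G :=
  SimpleGraph.fromRel (fun g h => h * g⁻¹ ∈ R)

/-- `Cay(G,R)` is a GRR for `G`: every automorphism is a right translation. -/
def IsCayleyGRR (G : Type*) [Group G] (R : Set G) : Prop :=
  ∀ σ : Equiv.Perm G, IsGraphAut (Cay G R) σ → ∃ g : G, ∀ h : G, σ h = h * g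

/-- `Γ[X]_I` for `Γ = Cay(G,R)` and `X = R`: the set of isolated vertices of the
subgraph of `Cay(G,R)` induced on `R`. -/
def cayIso (G : Type*) [Group G] (R : Set G) : Set G :=
  {v : G | v ∈ R ∧ ∀ u ∈ R, ¬ (Cay G R).Adj v u}

/-- The "complement" connection set `Rᶜ = G ∖ ({1} ∪ R)`. -/
def Rcompl (G : Type*) [Group G] (R : Set G) : Set G :=
  ({1} ∪ R)ᶜ

section Basics
variable {G : Type*} [Group G]

/-- symmetric Cayley set assumptions bundled -/
structure CaySet (G : Type*) [Group G] (X : Set G) : Prop where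
  one : (1 : G) ∉ X
  inv : ∀ x ∈ X, x⁻¹ ∈ X

lemma cay_adj {X : Set G} (hX : CaySet G X) {u v : G} :
    (Cay G X).Adj u v ↔ u ≠ v ∧ v * u⁻¹ ∈ X := by
  show u ≠ v ∧ (v * u⁻¹ ∈ X ∨ u * v⁻¹ ∈ X) ↔ _
  constructor
  · rintro ⟨h, h2 | h2⟩
    · exact ⟨h, h2⟩
    · refine ⟨h, ?_⟩
      have := hX.inv _ h2
      rwa [mul_inv_rev, inv_inv] at this
  · rintro ⟨h, h2⟩; exact ⟨h, Or.inl h2⟩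

lemma mem_Rcompl {R : Set G} {x : G} : x ∈ Rcompl G R ↔ x ≠ 1 ∧ x ∉ R := by
  simp only [Rcompl, Set.mem_compl_iff, Set.mem_union, Set.mem_singleton_iff]
  tauto

lemma Rcompl_caySet {R : Set G} (hR : CaySet G R) : CaySet G (Rcompl G R) := by
  constructor
  · simp [mem_Rcompl]
  · intro x hx
    rw [mem_Rcompl] at hx ⊢
    refine ⟨by simpa using hx.1, fun h => hx.2 ?_⟩
    simpa using hR.inv _ h

lemma Rcompl_Rcompl {R : Set G} (hR : CaySet G R) : Rcompl G (Rcompl G R) = R := by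
  ext x
  simp only [mem_Rcompl]
  constructor
  · rintro ⟨h1, h2⟩
    by_contra hx
    exact h2 ⟨h1, hx⟩
  · intro hx
    exact ⟨fun h => hR.one (h ▸ hx), fun h => h.2 hx⟩

lemma mem_one_union_iff {R : Set G} (hR : CaySet G R) {x : G} :
    x ∈ ({1} ∪ R : Set G) ↔ x ∉ Rcompl G R := by
  simp [Rcompl]
  tauto

/-- trichotomy -/
lemma tricho {R : Set G} (x : G) : x = 1 ∨ x ∈ R ∨ x ∈ Rcompl G R := by
  by_cases h1 : x = 1
  · exact Or.inl h1
  by_cases h2 : x ∈ R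
  · exact Or.inr (Or.inl h2)
  · exact Or.inr (Or.inr (mem_Rcompl.2 ⟨h1, h2⟩))

lemma mem_cayIso {X : Set G} (hX : CaySet G X) {a : G} :
    a ∈ cayIso G X ↔ a ∈ X ∧ ∀ u ∈ X, u * a⁻¹ ∉ X := by
  unfold cayIso
  simp only [Set.mem_setOf_eq]
  constructor
  · rintro ⟨ha, h⟩
    refine ⟨ha, fun u hu hua => h u hu ?_⟩
    rw [cay_adj hX]
    refine ⟨fun he => hX.one ?_, hua⟩
    rw [he] at hua; simpa using hua
  · rintro ⟨ha, h⟩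
    refine ⟨ha, fun u hu hadj => ?_⟩
    rw [cay_adj hX] at hadj
    exact h u hu hadj.2

lemma cayIso_subset {X : Set G} : cayIso G X ⊆ X := fun _ h => h.1

lemma cayIso_inv {X : Set G} (hX : CaySet G X) {a : G} (ha : a ∈ cayIso G X) :
    a⁻¹ ∈ cayIso G X := by
  rw [mem_cayIso hX] at ha ⊢
  refine ⟨hX.inv _ ha.1, fun u hu hua => ?_⟩
  -- u * a ∈ X; then (u*a ∈ X) and (u*a)*a⁻¹ = u ∈ X : contradiction with ha.2
  have := ha.2 (u * a⁻¹⁻¹) (by simpa using hua)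
  simp at this
  exact this hu

end Basics

section Perms
variable {V : Type*}

/-- permutation from an involution -/
def invPerm (f : V → V) (h : ∀ x, f (f x) = x) : Equiv.Perm V := ⟨f, f, h, h⟩

lemma invPerm_apply (f : V → V) (h : ∀ x, f (f x) = x) (x : V) : invPerm f h x = f x := rfl

lemma invPerm_aut (Γ : SimpleGraph V) (f : V → V) (h : ∀ x, f (f x) = x)
    (hpres : ∀ u v, Γ.Adj u v → Γ.Adj (f u) (f v)) : IsGraphAut Γ (invPerm f h) := by
  intro u v
  constructor
  · intro hadj
    have := hpres _ _ hadj
    rw [invPerm_apply, invPerm_apply] at hadj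
    rw [invPerm_apply, invPerm_apply, h, h] at this
    exact this
  · exact hpres u v

open scoped Classical in
/-- double swap as involution -/
noncomputable def dbl (a b c d : V) : V → V :=
  fun x => if x = a then b else if x = b then a else if x = c then d else if x = d then c else x

open scoped Classical in
lemma dbl_invol {a b c d : V} (hab : a ≠ b) (hcd : c ≠ d) (hac : a ≠ c) (had : a ≠ d)
    (hbc : b ≠ c) (hbd : b ≠ d) : ∀ x, dbl a b c d (dbl a b c d x) = x := by
  intro x
  unfold dbl
  split_ifs with h1 h2 h3 h4 <;>
    simp_all [hab.symm, hcd.symm, hac.symm, had.symm, hbc.symm, hbd.symm]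

end Perms

section GRRUse
variable {G : Type*} [Group G]

lemma grr_fix {R : Set G} (hGRR : IsCayleyGRR G R) {σ : Equiv.Perm G}
    (hσ : IsGraphAut (Cay G R) σ) (h1 : σ 1 = 1) : ∀ x, σ x = x := by
  obtain ⟨g, hg⟩ := hGRR σ hσ
  have := hg 1
  rw [one_mul, h1] at this
  intro x
  rw [hg x, ← this, mul_one]

/-- main contradiction engine: an automorphism fixing 1 but moving some point kills GRR -/
lemma grr_contra {R : Set G} (hGRR : IsCayleyGRR G R) {σ : Equiv.Perm G}
    (hσ : IsGraphAut (Cay G R) σ) (h1 : σ 1 = 1) {x : G} (hx : σ x ≠ x) : False :=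
  hx (grr_fix hGRR hσ h1 x)

/-- complement transfer for automorphisms -/
lemma aut_compl {R : Set G} (hR : CaySet G R) {σ : Equiv.Perm G}
    (hσ : IsGraphAut (Cay G (Rcompl G R)) σ) : IsGraphAut (Cay G R) σ := by
  have hS := Rcompl_caySet hR
  have key : ∀ u v : G, (Cay G R).Adj u v ↔ u ≠ v ∧ ¬ (Cay G (Rcompl G R)).Adj u v := by
    intro u v
    rw [cay_adj hR, cay_adj hS]
    constructor
    · rintro ⟨hne, hm⟩
      refine ⟨hne, fun h => ?_⟩
      exact (mem_Rcompl.1 h.2).2 hm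
    · rintro ⟨hne, h⟩
      refine ⟨hne, ?_⟩
      rcases tricho (R := R) (v * u⁻¹) with h1 | h1 | h1
      · exact absurd (by rwa [mul_inv_eq_one, eq_comm] at h1) hne
      · exact h1
      · exact absurd ⟨hne, h1⟩ h
  intro u v
  rw [key, key u v]
  constructor
  · rintro ⟨hne, h⟩
    exact ⟨fun he => hne (by rw [he]), fun hh => h ((hσ u v).2 hh)⟩
  · rintro ⟨hne, h⟩
    exact ⟨fun he => hne (σ.injective he), fun hh => h ((hσ u v).1 hh)⟩

lemma grr_compl {R : Set G} (hR : CaySet G R) (hGRR : IsCayleyGRR G R) :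
    IsCayleyGRR G (Rcompl G R) := by
  intro σ hσ
  exact hGRR σ (aut_compl hR hσ)

end GRRUse

section Swaps
variable {V : Type*} (Γ : SimpleGraph V)

open scoped Classical in
noncomputable def sgl (a b : V) : V → V :=
  fun x => if x = a then b else if x = b then a else x

open scoped Classical in
lemma sgl_invol {a b : V} : ∀ x, sgl a b (sgl a b x) = x := by
  intro x
  unfold sgl
  split_ifs with h1 h2 <;> simp_all

open scoped Classical in
lemma sgl_a {a b : V} : sgl a b a = b := by simp [sgl]
open scoped Classical in
lemma sgl_b {a b : V} : sgl a b b = a := by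
  unfold sgl; split_ifs with h <;> simp_all
open scoped Classical in
lemma sgl_o {a b w : V} (h1 : w ≠ a) (h2 : w ≠ b) : sgl a b w = w := by
  simp [sgl, h1, h2]

lemma sgl_aut {a b : V} (hab : a ≠ b)
    (H : ∀ w, w ≠ a → w ≠ b → (Γ.Adj w a ↔ Γ.Adj w b)) :
    IsGraphAut Γ (invPerm (sgl a b) sgl_invol) := by
  apply invPerm_aut
  intro u v huv
  rcases eq_or_ne a u with rfl | hua
  · rcases eq_or_ne a v with rfl | hva
    · exact absurd rfl (Γ.ne_of_adj huv)
    rcases eq_or_ne b v with rfl | hvb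
    · rw [sgl_a, sgl_b]; exact huv.symm
    · rw [sgl_a, sgl_o hva.symm hvb.symm]
      exact ((H v hva.symm hvb.symm).1 huv.symm).symm
  rcases eq_or_ne b u with rfl | hub
  · rcases eq_or_ne a v with rfl | hva
    · rw [sgl_b, sgl_a]; exact huv.symm
    rcases eq_or_ne b v with rfl | hvb
    · exact absurd rfl (Γ.ne_of_adj huv)
    · rw [sgl_b, sgl_o hva.symm hvb.symm]
      exact ((H v hva.symm hvb.symm).2 huv.symm).symm
  · rw [sgl_o hua.symm hub.symm]
    rcases eq_or_ne a v with rfl | hva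
    · rw [sgl_a]; exact (H u hua.symm hub.symm).1 huv
    rcases eq_or_ne b v with rfl | hvb
    · rw [sgl_b]; exact (H u hua.symm hub.symm).2 huv
    · rw [sgl_o hva.symm hvb.symm]; exact huv

open scoped Classical in
lemma dbl_a {a b c d : V} : dbl a b c d a = b := by simp [dbl]
open scoped Classical in
lemma dbl_b {a b c d : V} (hab : a ≠ b) : dbl a b c d b = a := by
  simp [dbl, hab.symm]
open scoped Classical in
lemma dbl_c {a b c d : V} (hac : a ≠ c) (hbc : b ≠ c) : dbl a b c d c = d := by
  simp [dbl, hac.symm, hbc.symm]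
open scoped Classical in
lemma dbl_d {a b c d : V} (had : a ≠ d) (hbd : b ≠ d) (hcd : c ≠ d) :
    dbl a b c d d = c := by
  simp [dbl, had.symm, hbd.symm, hcd.symm]
open scoped Classical in
lemma dbl_o {a b c d w : V} (h1 : w ≠ a) (h2 : w ≠ b) (h3 : w ≠ c) (h4 : w ≠ d) :
    dbl a b c d w = w := by
  simp [dbl, h1, h2, h3, h4]

lemma dbl_aut {a b c d : V} (hab : a ≠ b) (hcd : c ≠ d) (hac : a ≠ c) (had : a ≠ d)
    (hbc : b ≠ c) (hbd : b ≠ d)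
    (H1 : ∀ w, w ≠ a → w ≠ b → w ≠ c → w ≠ d →
      ((Γ.Adj w a ↔ Γ.Adj w b) ∧ (Γ.Adj w c ↔ Γ.Adj w d)))
    (H2 : Γ.Adj a c ↔ Γ.Adj b d) (H3 : Γ.Adj a d ↔ Γ.Adj b c) :
    IsGraphAut Γ (invPerm (dbl a b c d) (dbl_invol hab hcd hac had hbc hbd)) := by
  have comm : ∀ u v : V, Γ.Adj u v → Γ.Adj v u := fun u v h => h.symm
  apply invPerm_aut
  have ea := dbl_a (a := a) (b := b) (c := c) (d := d)
  have eb := dbl_b (a := a) (c := c) (d := d) hab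
  have ec := dbl_c (a := a) (b := b) (d := d) hac hbc
  have ed := dbl_d (b := b) (c := c) had hbd hcd
  intro u v huv
  rcases eq_or_ne a u with rfl | hua
  · rcases eq_or_ne a v with rfl | hva
    · exact absurd rfl (Γ.ne_of_adj huv)
    rcases eq_or_ne b v with rfl | hvb
    · rw [ea, eb]; exact huv.symm
    rcases eq_or_ne c v with rfl | hvc
    · rw [ea, ec]; exact H2.1 huv
    rcases eq_or_ne d v with rfl | hvd
    · rw [ea, ed]; exact H3.1 huv
    · rw [ea, dbl_o hva.symm hvb.symm hvc.symm hvd.symm]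
      exact comm _ _ ((H1 v hva.symm hvb.symm hvc.symm hvd.symm).1.1 (comm _ _ huv))
  rcases eq_or_ne b u with rfl | hub
  · rcases eq_or_ne a v with rfl | hva
    · rw [eb, ea]; exact huv.symm
    rcases eq_or_ne b v with rfl | hvb
    · exact absurd rfl (Γ.ne_of_adj huv)
    rcases eq_or_ne c v with rfl | hvc
    · rw [eb, ec]; exact H3.2 huv
    rcases eq_or_ne d v with rfl | hvd
    · rw [eb, ed]; exact H2.2 huv
    · rw [eb, dbl_o hva.symm hvb.symm hvc.symm hvd.symm]
      exact comm _ _ ((H1 v hva.symm hvb.symm hvc.symm hvd.symm).1.2 (comm _ _ huv))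
  rcases eq_or_ne c u with rfl | huc
  · rcases eq_or_ne a v with rfl | hva
    · rw [ec, ea]; exact comm _ _ (H2.1 (comm _ _ huv))
    rcases eq_or_ne b v with rfl | hvb
    · rw [ec, eb]; exact comm _ _ (H3.2 (comm _ _ huv))
    rcases eq_or_ne c v with rfl | hvc
    · exact absurd rfl (Γ.ne_of_adj huv)
    rcases eq_or_ne d v with rfl | hvd
    · rw [ec, ed]; exact huv.symm
    · rw [ec, dbl_o hva.symm hvb.symm hvc.symm hvd.symm]
      exact comm _ _ ((H1 v hva.symm hvb.symm hvc.symm hvd.symm).2.1 (comm _ _ huv))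
  rcases eq_or_ne d u with rfl | hud
  · rcases eq_or_ne a v with rfl | hva
    · rw [ed, ea]; exact comm _ _ (H3.1 (comm _ _ huv))
    rcases eq_or_ne b v with rfl | hvb
    · rw [ed, eb]; exact comm _ _ (H2.2 (comm _ _ huv))
    rcases eq_or_ne c v with rfl | hvc
    · rw [ed, ec]; exact huv.symm
    rcases eq_or_ne d v with rfl | hvd
    · exact absurd rfl (Γ.ne_of_adj huv)
    · rw [ed, dbl_o hva.symm hvb.symm hvc.symm hvd.symm]
      exact comm _ _ ((H1 v hva.symm hvb.symm hvc.symm hvd.symm).2.2 (comm _ _ huv))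
  · rw [dbl_o hua.symm hub.symm huc.symm hud.symm]
    rcases eq_or_ne a v with rfl | hva
    · rw [ea]; exact (H1 u hua.symm hub.symm huc.symm hud.symm).1.1 huv
    rcases eq_or_ne b v with rfl | hvb
    · rw [eb]; exact (H1 u hua.symm hub.symm huc.symm hud.symm).1.2 huv
    rcases eq_or_ne c v with rfl | hvc
    · rw [ec]; exact (H1 u hua.symm hub.symm huc.symm hud.symm).2.1 huv
    rcases eq_or_ne d v with rfl | hvd
    · rw [ed]; exact (H1 u hua.symm hub.symm huc.symm hud.symm).2.2 huv
    · rw [dbl_o hva.symm hvb.symm hvc.symm hvd.symm]; exact huv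

end Swaps

section Contra
variable {G : Type*} [Group G] {R : Set G}

/-- a "twin" pair kills the GRR property -/
lemma swap_contra (hGRR : IsCayleyGRR G R) {u v : G} (hu : u ≠ 1) (hv : v ≠ 1)
    (huv : u ≠ v)
    (H : ∀ w, w ≠ u → w ≠ v → ((Cay G R).Adj w u ↔ (Cay G R).Adj w v)) : False := by
  refine grr_contra hGRR (sgl_aut (Cay G R) huv H) ?_ (x := u) ?_
  · rw [invPerm_apply, sgl_o (Ne.symm hu) (Ne.symm hv)]
  · rw [invPerm_apply, sgl_a]
    exact Ne.symm huv

lemma dblswap_contra (hGRR : IsCayleyGRR G R) {a b c d : G}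
    (ha : a ≠ 1) (hb : b ≠ 1) (hc : c ≠ 1) (hd : d ≠ 1)
    (hab : a ≠ b) (hcd : c ≠ d) (hac : a ≠ c) (had : a ≠ d) (hbc : b ≠ c) (hbd : b ≠ d)
    (H1 : ∀ w, w ≠ a → w ≠ b → w ≠ c → w ≠ d →
      (((Cay G R).Adj w a ↔ (Cay G R).Adj w b) ∧ ((Cay G R).Adj w c ↔ (Cay G R).Adj w d)))
    (H2 : (Cay G R).Adj a c ↔ (Cay G R).Adj b d)
    (H3 : (Cay G R).Adj a d ↔ (Cay G R).Adj b c) : False := by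
  refine grr_contra hGRR (dbl_aut (Cay G R) hab hcd hac had hbc hbd H1 H2 H3) ?_ (x := a) ?_
  · rw [invPerm_apply, dbl_o (Ne.symm ha) (Ne.symm hb) (Ne.symm hc) (Ne.symm hd)]
  · rw [invPerm_apply, dbl_a]
    exact Ne.symm hab

end Contra

section Counting
variable {G : Type*} [Group G] [Finite G]

lemma two_nonone (hn : 2 < Nat.card G) : ∃ u v : G, u ≠ 1 ∧ v ≠ 1 ∧ u ≠ v := by
  have h1 : ({1}ᶜ : Set G).ncard = Nat.card G - 1 := by
    have := Set.ncard_add_ncard_compl ({1} : Set G)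
    have h2 : ({1} : Set G).ncard = 1 := Set.ncard_singleton 1
    omega
  have h2 : 1 < ({1}ᶜ : Set G).ncard := by omega
  rw [Set.one_lt_ncard_iff (Set.toFinite _)] at h2
  obtain ⟨u, v, hu, hv, huv⟩ := h2
  exact ⟨u, v, by simpa using hu, by simpa using hv, huv⟩

lemma card_parts {R : Set G} (hR : CaySet G R) :
    Nat.card G = 1 + R.ncard + (Rcompl G R).ncard := by
  have h1 := Set.ncard_add_ncard_compl ({1} ∪ R : Set G)
  have h2 : ({1} ∪ R : Set G).ncard = 1 + R.ncard := by
    rw [Set.ncard_union_eq (by simpa using hR.one) (Set.toFinite _) (Set.toFinite _),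
      Set.ncard_singleton]
  rw [Rcompl]
  omega

/-- right translate of a set -/
def Rt (X : Set G) (a : G) : Set G := (fun x => x * a) '' X

lemma mem_Rt {X : Set G} {a y : G} : y ∈ Rt X a ↔ y * a⁻¹ ∈ X := by
  constructor
  · rintro ⟨x, hx, rfl⟩; simpa using hx
  · intro h; exact ⟨y * a⁻¹, h, by simp⟩

lemma ncard_Rt (X : Set G) (a : G) : (Rt X a).ncard = X.ncard :=
  Set.ncard_image_of_injective _ (mul_left_injective a)

lemma missing_elt {U T : Set G} (hsub : U ⊆ T) (hc : T.ncard = U.ncard + 1) :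
    ∃ z ∈ T, z ∉ U ∧ ∀ w, w ∈ U ↔ (w ∈ T ∧ w ≠ z) := by
  have hd : (T \ U).ncard = 1 := by
    rw [Set.ncard_diff hsub (Set.toFinite _)]; omega
  rw [Set.ncard_eq_one] at hd
  obtain ⟨z, hz⟩ := hd
  have hzT : z ∈ T ∧ z ∉ U := by
    have : z ∈ T \ U := by rw [hz]; rfl
    exact ⟨this.1, this.2⟩
  refine ⟨z, hzT.1, hzT.2, fun w => ⟨fun hw => ⟨hsub hw, fun he => hzT.2 (he ▸ hw)⟩, ?_⟩⟩
  rintro ⟨hwT, hwz⟩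
  by_contra hwU
  have : w ∈ T \ U := ⟨hwT, hwU⟩
  rw [hz] at this
  exact hwz this

lemma exists_not_mem_of_ne_top {K : Subgroup G} (h : K ≠ ⊤) : ∃ g : G, g ∉ K := by
  by_contra hc
  push_neg at hc
  exact h ((Subgroup.eq_top_iff' K).2 hc)

end Counting

section ClosureTop
variable {G : Type*} [Group G] [Finite G]

lemma closure_eq_top {X : Set G} (hX : CaySet G X) (hGRR : IsCayleyGRR G X)
    (hn : 2 < Nat.card G) : Subgroup.closure X = ⊤ := by
  by_cases hE : X = ∅
  · exfalso
    obtain ⟨u, v, hu, hv, huv⟩ := two_nonone hn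
    refine swap_contra hGRR hu hv huv (fun w _ _ => ?_)
    rw [cay_adj hX, cay_adj hX, hE]
    simp
  by_contra hK
  obtain ⟨m, hm⟩ := Set.nonempty_iff_ne_empty.2 hE
  obtain ⟨g₀, hg₀⟩ := exists_not_mem_of_ne_top hK
  set K := Subgroup.closure X with hKdef
  have hXK : X ⊆ (K : Set G) := Subgroup.subset_closure
  have hmK : m ∈ K := hXK hm
  have hm1 : m ≠ 1 := fun h => hX.one (h ▸ hm)
  set t : G := g₀⁻¹ * m * g₀ with ht
  classical
  have key : ∀ v : G, (v * t) * g₀⁻¹ ∈ K ↔ v * g₀⁻¹ ∈ K := by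
    intro v
    have he : (v * t) * g₀⁻¹ = (v * g₀⁻¹) * m := by
      rw [ht]; group
    rw [he]
    exact K.mul_mem_cancel_right hmK
  have key' : ∀ v : G, (v * t⁻¹) * g₀⁻¹ ∈ K ↔ v * g₀⁻¹ ∈ K := by
    intro v
    have he : (v * t⁻¹) * g₀⁻¹ = (v * g₀⁻¹) * m⁻¹ := by
      rw [ht]; group
    rw [he]
    exact K.mul_mem_cancel_right (K.inv_mem hmK)
  let f : G → G := fun v => if v * g₀⁻¹ ∈ K then v * t else v
  let fi : G → G := fun v => if v * g₀⁻¹ ∈ K then v * t⁻¹ else v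
  have hfi : ∀ v, fi (f v) = v := by
    intro v
    by_cases h : v * g₀⁻¹ ∈ K
    · show (if (if v * g₀⁻¹ ∈ K then v * t else v) * g₀⁻¹ ∈ K then (if v * g₀⁻¹ ∈ K then v * t else v) * t⁻¹ else (if v * g₀⁻¹ ∈ K then v * t else v)) = v
      rw [if_pos h]
      rw [if_pos ((key v).2 h), mul_assoc, mul_inv_cancel, mul_one]
    · show (if (if v * g₀⁻¹ ∈ K then v * t else v) * g₀⁻¹ ∈ K then (if v * g₀⁻¹ ∈ K then v * t else v) * t⁻¹ else (if v * g₀⁻¹ ∈ K then v * t else v)) = v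
      rw [if_neg h, if_neg h]
  have hif : ∀ v, f (fi v) = v := by
    intro v
    by_cases h : v * g₀⁻¹ ∈ K
    · show (if (if v * g₀⁻¹ ∈ K then v * t⁻¹ else v) * g₀⁻¹ ∈ K then (if v * g₀⁻¹ ∈ K then v * t⁻¹ else v) * t else (if v * g₀⁻¹ ∈ K then v * t⁻¹ else v)) = v
      rw [if_pos h]
      rw [if_pos ((key' v).2 h), mul_assoc, inv_mul_cancel, mul_one]
    · show (if (if v * g₀⁻¹ ∈ K then v * t⁻¹ else v) * g₀⁻¹ ∈ K then (if v * g₀⁻¹ ∈ K then v * t⁻¹ else v) * t else (if v * g₀⁻¹ ∈ K then v * t⁻¹ else v)) = v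
      rw [if_neg h, if_neg h]
  let τ : Equiv.Perm G := ⟨f, fi, hfi, hif⟩
  have τap : ∀ v : G, τ v = if v * g₀⁻¹ ∈ K then v * t else v := fun v => rfl
  have hcross : ∀ p q : G, p * g₀⁻¹ ∈ K → q * g₀⁻¹ ∉ K → q * p⁻¹ ∉ X := by
    intro p q hp hq hmem
    apply hq
    have h1 : q * p⁻¹ ∈ K := hXK hmem
    have := K.mul_mem h1 hp
    rwa [show q * p⁻¹ * (p * g₀⁻¹) = q * g₀⁻¹ by group] at this
  have haut : IsGraphAut (Cay G X) τ := by
    intro u v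
    rw [cay_adj hX, cay_adj hX]
    have hne : τ u ≠ τ v ↔ u ≠ v := by
      constructor
      · intro h he; exact h (he ▸ rfl)
      · intro h he; exact h (τ.injective he)
    rw [τap, τap]
    by_cases hu : u * g₀⁻¹ ∈ K <;> by_cases hv : v * g₀⁻¹ ∈ K
    · rw [if_pos hu, if_pos hv]
      have he : (v * t) * (u * t)⁻¹ = v * u⁻¹ := by group
      rw [he]
      constructor
      · rintro ⟨h1, h2⟩
        exact ⟨fun he2 => h1 (he2 ▸ rfl), h2⟩
      · rintro ⟨h1, h2⟩
        exact ⟨fun he2 => h1 (mul_right_cancel he2), h2⟩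
    · rw [if_pos hu, if_neg hv]
      have h1 : v * u⁻¹ ∉ X := hcross u v hu hv
      have h2 : v * (u * t)⁻¹ ∉ X := by
        apply hcross (u * t) v ((key u).2 hu)
        exact hv
      simp only [h1, h2, and_false]
    · rw [if_neg hu, if_pos hv]
      have h1 : v * u⁻¹ ∉ X := by
        intro hmem
        have h1' : u * v⁻¹ ∈ X := by
          have := hX.inv _ hmem
          rwa [mul_inv_rev, inv_inv] at this
        exact hcross v u hv hu h1'
      have h2 : (v * t) * u⁻¹ ∉ X := by
        intro hmem
        have h2' : u * (v * t)⁻¹ ∈ X := by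
          have := hX.inv _ hmem
          rwa [mul_inv_rev, inv_inv] at this
        exact hcross (v * t) u ((key v).2 hv) hu h2'
      simp only [h1, h2, and_false]
    · rw [if_neg hu, if_neg hv]
  refine grr_contra hGRR haut ?_ (x := g₀) ?_
  · rw [τap]
    have : (1 : G) * g₀⁻¹ ∉ K := by
      rw [one_mul, K.inv_mem_iff]
      exact hg₀
    rw [if_neg this]
  · rw [τap, if_pos (by rw [mul_inv_cancel]; exact K.one_mem : g₀ * g₀⁻¹ ∈ K)]
    rw [ht]
    intro h
    apply hm1
    have : g₀ * (g₀⁻¹ * m * g₀) = m * g₀ := by group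
    rw [this] at h
    exact mul_right_cancel (h.trans (one_mul g₀).symm)

end ClosureTop

section Part1
variable {G : Type*} [Group G] [Finite G]

lemma adj_Rt {X : Set G} (hX : CaySet G X) (a w : G) :
    (Cay G X).Adj a w ↔ w ∈ Rt X a := by
  rw [cay_adj hX, mem_Rt]
  constructor
  · rintro ⟨_, h⟩; exact h
  · intro h
    refine ⟨fun he => hX.one ?_, h⟩
    rw [he] at h; simpa using h

lemma iso_Rt_notmem {X : Set G} (hX : CaySet G X) {a : G} (ha : a ∈ cayIso G X) :
    ∀ y ∈ Rt X a, y ∉ X := by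
  intro y hy hyX
  rw [mem_Rt] at hy
  exact ((mem_cayIso hX).1 ha).2 y hyX hy

lemma iso_Rt_sub {X : Set G} (hX : CaySet G X) {a : G} (ha : a ∈ cayIso G X) :
    Rt X a ⊆ {1} ∪ Rcompl G X := by
  intro y hy
  rcases tricho (R := X) y with h | h | h
  · exact Or.inl h
  · exact absurd h (iso_Rt_notmem hX ha y hy)
  · exact Or.inr h

lemma one_mem_Rt {X : Set G} (hX : CaySet G X) {a : G} (ha : a ∈ X) : 1 ∈ Rt X a := by
  rw [mem_Rt, one_mul]
  exact hX.inv a ha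

lemma mem_ne_one {X : Set G} (hX : CaySet G X) {a : G} (ha : a ∈ X) : a ≠ 1 :=
  fun h => hX.one (h ▸ ha)

lemma ncard_one_union {Y : Set G} (hY : (1 : G) ∉ Y) :
    ({1} ∪ Y : Set G).ncard = 1 + Y.ncard := by
  rw [Set.ncard_union_eq (by simpa using hY) (Set.toFinite _) (Set.toFinite _),
    Set.ncard_singleton]

/-- two distinct isolated vertices force `|X| ≤ |Xᶜ|` -/
lemma side {X : Set G} (hX : CaySet G X) (hGRR : IsCayleyGRR G X) {a b : G}
    (ha : a ∈ cayIso G X) (hb : b ∈ cayIso G X) (hab : a ≠ b) :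
    X.ncard ≤ (Rcompl G X).ncard := by
  have haX : a ∈ X := ha.1
  have hbX : b ∈ X := hb.1
  by_cases he : Rt X a = Rt X b
  · exfalso
    refine swap_contra hGRR (mem_ne_one hX haX) (mem_ne_one hX hbX) hab (fun w _ _ => ?_)
    rw [(Cay G X).adj_comm w a, (Cay G X).adj_comm w b, adj_Rt hX, adj_Rt hX, he]
  · have h1 : ¬ Rt X b ⊆ Rt X a := by
      intro h
      exact he (Set.eq_of_subset_of_ncard_le h
        (by rw [ncard_Rt, ncard_Rt]) (Set.toFinite _)).symm
    have h2 : Rt X a ⊂ Rt X a ∪ Rt X b :=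
      ⟨Set.subset_union_left, fun h => h1 (subset_trans Set.subset_union_right h)⟩
    have h3 : X.ncard < ({1} ∪ Rcompl G X : Set G).ncard := by
      calc X.ncard = (Rt X a).ncard := (ncard_Rt _ _).symm
        _ < (Rt X a ∪ Rt X b).ncard := Set.ncard_lt_ncard h2 (Set.toFinite _)
        _ ≤ ({1} ∪ Rcompl G X : Set G).ncard :=
            Set.ncard_le_ncard (Set.union_subset (iso_Rt_sub hX ha) (iso_Rt_sub hX hb))
              (Set.toFinite _)
    have h4 : ({1} ∪ Rcompl G X : Set G).ncard = 1 + (Rcompl G X).ncard :=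
      ncard_one_union (Rcompl_caySet hX).one
    omega

lemma part1 {R : Set G} (hR : CaySet G R) (hGRR : IsCayleyGRR G R) :
    (cayIso G R).ncard ≤ 1 ∨ (cayIso G (Rcompl G R)).ncard ≤ 1 := by
  by_contra hcon
  push_neg at hcon
  obtain ⟨hA2, hB2⟩ := hcon
  set S := Rcompl G R with hSdef
  have hS : CaySet G S := Rcompl_caySet hR
  have hGS : IsCayleyGRR G S := grr_compl hR hGRR
  have hSS : Rcompl G S = R := Rcompl_Rcompl hR
  obtain ⟨a, b, ha, hb, hab⟩ := (Set.one_lt_ncard_iff (Set.toFinite _)).1 hA2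
  obtain ⟨c, d, hc, hd, hcd⟩ := (Set.one_lt_ncard_iff (Set.toFinite _)).1 hB2
  have hRS : R.ncard ≤ S.ncard := side hR hGRR ha hb hab
  have hSR : S.ncard ≤ R.ncard := by
    have := side hS hGS hc hd hcd
    rwa [hSS] at this
  have hcardRS : R.ncard = S.ncard := le_antisymm hRS hSR
  -- extract missing elements
  have hmiss : ∀ x ∈ cayIso G R, ∃ z ∈ S, (∀ w, w ∈ Rt R x ↔ (w ∈ ({1} ∪ S : Set G) ∧ w ≠ z)) := by
    intro x hx
    obtain ⟨z, hzT, hzU, hch⟩ := missing_elt (iso_Rt_sub hR hx)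
      (by rw [ncard_one_union hS.one, ncard_Rt, hcardRS]; omega)
    refine ⟨z, ?_, fun w => hch w⟩
    rcases hzT with h | h
    · exfalso
      exact hzU (by rw [Set.mem_singleton_iff] at h; rw [h]; exact one_mem_Rt hR hx.1)
    · exact h
  have hmiss' : ∀ x ∈ cayIso G S, ∃ z ∈ R, (∀ w, w ∈ Rt S x ↔ (w ∈ ({1} ∪ R : Set G) ∧ w ≠ z)) := by
    intro x hx
    have hsub : Rt S x ⊆ ({1} ∪ R : Set G) := by
      have := iso_Rt_sub hS hx
      rwa [hSS] at this
    obtain ⟨z, hzT, hzU, hch⟩ := missing_elt hsub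
      (by rw [ncard_one_union hR.one, ncard_Rt, hcardRS]; omega)
    refine ⟨z, ?_, fun w => hch w⟩
    rcases hzT with h | h
    · exfalso
      exact hzU (by rw [Set.mem_singleton_iff] at h; rw [h]; exact one_mem_Rt hS hx.1)
    · exact h
  obtain ⟨sa, hsaS, Pa⟩ := hmiss a ha
  obtain ⟨sb, hsbS, Pb⟩ := hmiss b hb
  obtain ⟨rc, hrcR, Pc⟩ := hmiss' c hc
  obtain ⟨rd, hrdR, Pd⟩ := hmiss' d hd
  -- the key equivalence
  have keyiff : ∀ x z s r, x ∈ cayIso G R → z ∈ cayIso G S → s ∈ S → r ∈ R →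
      (∀ w, w ∈ Rt R x ↔ (w ∈ ({1} ∪ S : Set G) ∧ w ≠ s)) →
      (∀ w, w ∈ Rt S z ↔ (w ∈ ({1} ∪ R : Set G) ∧ w ≠ r)) →
      (((Cay G R).Adj x z ↔ z ≠ s) ∧ ((Cay G R).Adj x z ↔ x = r)) := by
    intro x z s r hx hz hsS hrR Px Pz
    have hxz : x ≠ z := fun h => (mem_Rcompl.1 hz.1).2 (h ▸ hx.1)
    constructor
    · rw [adj_Rt hR, Px]
      simp only [Set.mem_union, Set.mem_singleton_iff]
      constructor
      · rintro ⟨_, h⟩; exact h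
      · intro h; exact ⟨Or.inr hz.1, h⟩
    · rw [cay_adj hR]
      constructor
      · rintro ⟨_, hmem⟩
        by_contra hxr
        have hx1R : x ∈ ({1} ∪ R : Set G) := Or.inr hx.1
        have : x ∈ Rt S z := (Pz x).2 ⟨hx1R, hxr⟩
        rw [mem_Rt] at this
        have : (x * z⁻¹)⁻¹ ∈ S := hS.inv _ this
        rw [mul_inv_rev, inv_inv] at this
        exact (mem_Rcompl.1 this).2 hmem
      · intro hxr
        refine ⟨hxz, ?_⟩
        rcases tricho (R := R) (z * x⁻¹) with h | h | h
        · exact absurd (by rwa [mul_inv_eq_one, eq_comm] at h) hxz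
        · exact h
        · exfalso
          have hxRt : x ∈ Rt S z := by
            rw [mem_Rt]
            have := hS.inv _ h
            rwa [mul_inv_rev, inv_inv] at this
          exact ((Pz x).1 hxRt).2 hxr
  -- c and d must be the two missing elements
  have hin : ∀ z, z ∈ cayIso G S → (∀ r, r ∈ R → (∀ w, w ∈ Rt S z ↔ (w ∈ ({1} ∪ R : Set G) ∧ w ≠ r)) → z ≠ sa → z ≠ sb → False) := by
    intro z hz r hrR Pz hza hzb
    have k1 := keyiff a z sa r ha hz hsaS hrR Pa Pz
    have k2 := keyiff b z sb r hb hz hsbS hrR Pb Pz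
    have e1 : a = r := k1.2.1 (k1.1.2 hza)
    have e2 : b = r := k2.2.1 (k2.1.2 hzb)
    exact hab (e1.trans e2.symm)
  have hc' : c = sa ∨ c = sb := by
    by_contra hne
    push_neg at hne
    exact hin c hc rc hrcR Pc hne.1 hne.2
  have hd' : d = sa ∨ d = sb := by
    by_contra hne
    push_neg at hne
    exact hin d hd rd hrdR Pd hne.1 hne.2
  -- final contradiction routine
  have FIN : ∀ a' b' c' d' sa' sb' rc' rd' : G, a' ∈ cayIso G R → b' ∈ cayIso G R →
      c' ∈ cayIso G S → d' ∈ cayIso G S → a' ≠ b' → c' ≠ d' →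
      sa' ∈ S → sb' ∈ S → rc' ∈ R → rd' ∈ R →
      (∀ w, w ∈ Rt R a' ↔ (w ∈ ({1} ∪ S : Set G) ∧ w ≠ sa')) →
      (∀ w, w ∈ Rt R b' ↔ (w ∈ ({1} ∪ S : Set G) ∧ w ≠ sb')) →
      (∀ w, w ∈ Rt S c' ↔ (w ∈ ({1} ∪ R : Set G) ∧ w ≠ rc')) →
      (∀ w, w ∈ Rt S d' ↔ (w ∈ ({1} ∪ R : Set G) ∧ w ≠ rd')) →
      c' = sa' → d' = sb' → False := by
    intro a b c d sa sb rc rd ha hb hc hd hab hcd hsaS hsbS hrcR hrdR Pa Pb Pc Pd hca hdb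
    have hdsa : d ≠ sa := fun h => hcd (hca.trans h.symm)
    have hcsb : c ≠ sb := fun h => hcd (h.trans hdb.symm)
    have kac := keyiff a c sa rc ha hc hsaS hrcR Pa Pc
    have kad := keyiff a d sa rd ha hd hsaS hrdR Pa Pd
    have kbc := keyiff b c sb rc hb hc hsbS hrcR Pb Pc
    have kbd := keyiff b d sb rd hb hd hsbS hrdR Pb Pd
    have hbrc : b = rc := kbc.2.1 (kbc.1.2 hcsb)
    have hard : a = rd := kad.2.1 (kad.1.2 hdsa)
    have haR : a ∈ R := ha.1
    have hbR : b ∈ R := hb.1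
    have hcS : c ∈ S := hc.1
    have hdS : d ∈ S := hd.1
    have hac : a ≠ c := fun h => (mem_Rcompl.1 hcS).2 (h ▸ haR)
    have had : a ≠ d := fun h => (mem_Rcompl.1 hdS).2 (h ▸ haR)
    have hbc : b ≠ c := fun h => (mem_Rcompl.1 hcS).2 (h ▸ hbR)
    have hbd : b ≠ d := fun h => (mem_Rcompl.1 hdS).2 (h ▸ hbR)
    -- adjacency of outside vertices to c/d
    have hwadj : ∀ z rz w, z ∈ cayIso G S → w ≠ rz →
        (∀ w', w' ∈ Rt S z ↔ (w' ∈ ({1} ∪ R : Set G) ∧ w' ≠ rz)) →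
        ((Cay G R).Adj w z ↔ (w ≠ z ∧ w ∈ S)) := by
      intro z rz w hz hwrz Pz
      rw [(Cay G R).adj_comm w z, cay_adj hR]
      constructor
      · rintro ⟨hne, hmem⟩
        refine ⟨hne.symm, ?_⟩
        have hw1R : w ∉ ({1} ∪ R : Set G) := by
          intro hin2
          have : w ∈ Rt S z := (Pz w).2 ⟨hin2, hwrz⟩
          rw [mem_Rt] at this
          exact (mem_Rcompl.1 this).2 hmem
        rcases tricho (R := R) w with h | h | h
        · exact absurd (Or.inl (by simpa using h)) hw1R
        · exact absurd (Or.inr h) hw1R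
        · exact h
      · rintro ⟨hwz, hwS⟩
        refine ⟨hwz.symm, ?_⟩
        rcases tricho (R := R) (w * z⁻¹) with h | h | h
        · exact absurd (by rwa [mul_inv_eq_one] at h) hwz
        · exact h
        · exfalso
          have hwRt : w ∈ Rt S z := mem_Rt.2 h
          have := ((Pz w).1 hwRt).1
          rcases this with h2 | h2
          · exact (mem_Rcompl.1 hwS).1 (by simpa using h2)
          · exact (mem_Rcompl.1 hwS).2 h2
    refine dblswap_contra hGRR (mem_ne_one hR haR) (mem_ne_one hR hbR)
      (mem_ne_one hS hcS) (mem_ne_one hS hdS) hab hcd hac had hbc hbd ?_ ?_ ?_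
    · intro w hwa hwb hwc hwd
      constructor
      · rw [(Cay G R).adj_comm w a, (Cay G R).adj_comm w b, adj_Rt hR, adj_Rt hR, Pa, Pb]
        constructor
        · rintro ⟨h1, _⟩
          refine ⟨h1, fun h => hwd (h.trans hdb.symm)⟩
        · rintro ⟨h1, _⟩
          refine ⟨h1, fun h => hwc (h.trans hca.symm)⟩
      · rw [hwadj c rc w hc (fun h => hwb (h.trans hbrc.symm)) Pc,
          hwadj d rd w hd (fun h => hwa (h.trans hard.symm)) Pd]
        constructor
        · rintro ⟨_, h2⟩; exact ⟨hwd, h2⟩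
        · rintro ⟨_, h2⟩; exact ⟨hwc, h2⟩
    · exact iff_of_false (fun h => (kac.1.1 h) hca) (fun h => (kbd.1.1 h) hdb)
    · exact iff_of_true (kad.1.2 hdsa) (kbc.1.2 hcsb)
  rcases hc' with h | h
  · rcases hd' with h' | h'
    · exact hcd (h.trans h'.symm)
    · exact FIN a b c d sa sb rc rd ha hb hc hd hab hcd hsaS hsbS hrcR hrdR Pa Pb Pc Pd h h'
  · rcases hd' with h' | h'
    · exact FIN b a c d sb sa rc rd hb ha hc hd (Ne.symm hab) hcd hsbS hsaS hrcR hrdR Pb Pa Pc Pd h h'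
    · exact hcd (h.trans h'.symm)

end Part1

section SubgroupUtil
variable {G : Type*} [Group G] [Finite G]

lemma subgroup_set_card (H : Subgroup G) : ((H : Set G)).ncard = Nat.card H :=
  (Nat.card_coe_set_eq _).symm

lemma mixed_notmem {H : Subgroup G} {p q : G} (hp : p ∈ H) (hq : q ∉ H) : p * q ∉ H :=
  fun h => hq (by simpa using H.mul_mem (H.inv_mem hp) h)

lemma mixed_notmem' {H : Subgroup G} {p q : G} (hp : p ∉ H) (hq : q ∈ H) : p * q ∉ H :=
  fun h => hp (by simpa using H.mul_mem h (H.inv_mem hq))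

lemma index_two_of_card {H : Subgroup G} (h : 2 * Nat.card H = Nat.card G) :
    H.index = 2 := by
  have h1 := Subgroup.card_mul_index H
  have h2 : 0 < Nat.card H := Nat.card_pos
  have : Nat.card H * H.index = Nat.card H * 2 := by omega
  exact Nat.eq_of_mul_eq_mul_left h2 this

lemma cross_mul {H : Subgroup G} (hi : H.index = 2) {p q : G} (hp : p ∉ H) (hq : q ∉ H) :
    q * p⁻¹ ∈ H := by
  rw [Subgroup.index_eq_two_iff] at hi
  obtain ⟨a, ha⟩ := hi
  have hpa : p * a ∈ H := by
    rcases ha p with ⟨h1, h2⟩ | ⟨h1, h2⟩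
    · exact h1
    · exact absurd h1 hp
  have hqa : q * a ∈ H := by
    rcases ha q with ⟨h1, h2⟩ | ⟨h1, h2⟩
    · exact h1
    · exact absurd h1 hq
  have := H.mul_mem hqa (H.inv_mem hpa)
  rwa [show q * a * (p * a)⁻¹ = q * p⁻¹ by group] at this

lemma proper_card_lt {H : Subgroup G} (h : H ≠ ⊤) : Nat.card H < Nat.card G := by
  have h1 := Subgroup.card_mul_index H
  have h2 : 0 < Nat.card H := Nat.card_pos
  have h3 : H.index ≠ 1 := fun hi => h (Subgroup.index_eq_one.1 hi)
  have h4 : H.index ≠ 0 := by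
    have := Subgroup.index_mul_card H
    intro h0
    rw [h0, zero_mul] at this
    have : 0 < Nat.card G := Nat.card_pos
    omega
  have h5 : 2 ≤ H.index := by omega
  calc Nat.card H < Nat.card H * 2 := by omega
    _ ≤ Nat.card H * H.index := Nat.mul_le_mul_left _ h5
    _ = Nat.card G := h1

end SubgroupUtil

section Structures
variable {G : Type*} [Group G] [Finite G] {R : Set G}

/-- Structure X : `R = (M \ {1}) ∪ {w}` with `M` of index two, `w ∉ M`:
two cliques joined by a perfect matching; not a GRR. -/
lemma strX (hR : CaySet G R) (hGRR : IsCayleyGRR G R) (M : Subgroup G)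
    (hcross : ∀ p q : G, p ∉ M → q ∉ M → q * p⁻¹ ∈ M)
    {w x y : G} (hw : w ∉ M)
    (hdesc : ∀ v, v ∈ R ↔ ((v ∈ M ∧ v ≠ 1) ∨ v = w))
    (hx : x ∈ M) (hy : y ∈ M) (hx1 : x ≠ 1) (hy1 : y ≠ 1) (hxy : x ≠ y) : False := by
  have hwx : w * x ∉ M := mixed_notmem' hw hx
  have hwy : w * y ∉ M := mixed_notmem' hw hy
  have adjMM : ∀ p q : G, p ∈ M → q ∈ M → ((Cay G R).Adj p q ↔ p ≠ q) := by
    intro p q hp hq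
    rw [cay_adj hR]
    constructor
    · exact fun h => h.1
    · intro h
      refine ⟨h, (hdesc _).2 (Or.inl ⟨M.mul_mem hq (M.inv_mem hp), ?_⟩)⟩
      intro he
      exact h (by rwa [mul_inv_eq_one, eq_comm] at he)
  have adjCC : ∀ p q : G, p ∉ M → q ∉ M → ((Cay G R).Adj p q ↔ p ≠ q) := by
    intro p q hp hq
    rw [cay_adj hR]
    constructor
    · exact fun h => h.1
    · intro h
      refine ⟨h, (hdesc _).2 (Or.inl ⟨hcross p q hp hq, ?_⟩)⟩
      intro he
      exact h (by rwa [mul_inv_eq_one, eq_comm] at he)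
  have adjMC : ∀ p q : G, p ∈ M → q ∉ M → ((Cay G R).Adj p q ↔ q = w * p) := by
    intro p q hp hq
    have hne : p ≠ q := fun h => hq (h ▸ hp)
    have hqp : q * p⁻¹ ∉ M := mixed_notmem' hq (M.inv_mem hp)
    rw [cay_adj hR]
    constructor
    · rintro ⟨-, hm⟩
      rcases (hdesc _).1 hm with h | h
      · exact absurd h.1 hqp
      · rw [← h]; group
    · intro h
      refine ⟨hne, (hdesc _).2 (Or.inr ?_)⟩
      rw [h]; group
  have hx_wx : x ≠ w * x := fun h => hwx (h ▸ hx)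
  have hx_wy : x ≠ w * y := fun h => hwy (h ▸ hx)
  have hy_wx : y ≠ w * x := fun h => hwx (h ▸ hy)
  have hy_wy : y ≠ w * y := fun h => hwy (h ▸ hy)
  have hwxy : w * x ≠ w * y := fun h => hxy (mul_left_cancel h)
  have hwx1 : w * x ≠ 1 := fun h => hw (by
    rw [eq_inv_of_mul_eq_one_left h]; exact M.inv_mem hx)
  have hwy1 : w * y ≠ 1 := fun h => hw (by
    rw [eq_inv_of_mul_eq_one_left h]; exact M.inv_mem hy)
  refine dblswap_contra hGRR hx1 hy1 hwx1 hwy1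
    hxy hwxy hx_wx hx_wy hy_wx hy_wy ?_ ?_ ?_
  · intro v hvx hvy hvwx hvwy
    by_cases hv : v ∈ M
    · constructor
      · rw [adjMM v x hv hx, adjMM v y hv hy]
        exact ⟨fun _ => hvy, fun _ => hvx⟩
      · rw [adjMC v (w * x) hv hwx, adjMC v (w * y) hv hwy]
        exact iff_of_false (fun h => hvx (mul_left_cancel h).symm)
          (fun h => hvy (mul_left_cancel h).symm)
    · constructor
      · rw [(Cay G R).adj_comm v x, (Cay G R).adj_comm v y,
          adjMC x v hx hv, adjMC y v hy hv]
        exact iff_of_false hvwx hvwy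
      · rw [adjCC v (w * x) hv hwx, adjCC v (w * y) hv hwy]
        exact iff_of_true hvwx hvwy
  · exact iff_of_true ((adjMC x (w * x) hx hwx).2 rfl) ((adjMC y (w * y) hy hwy).2 rfl)
  · exact iff_of_false (fun h => hxy (mul_left_cancel ((adjMC x (w * y) hx hwy).1 h)).symm)
      (fun h => hxy (mul_left_cancel ((adjMC y (w * x) hy hwx).1 h)))

/-- Structure Y : `R = Hᶜ \ {c}` with `H` of index two:
complete bipartite minus a perfect matching; not a GRR. -/
lemma strY (hR : CaySet G R) (hGRR : IsCayleyGRR G R) (H : Subgroup G)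
    (hcross : ∀ p q : G, p ∉ H → q ∉ H → q * p⁻¹ ∈ H)
    {c x y : G} (hc : c ∉ H)
    (hdesc : ∀ v, v ∈ R ↔ (v ∉ H ∧ v ≠ c))
    (hx : x ∈ H) (hy : y ∈ H) (hx1 : x ≠ 1) (hy1 : y ≠ 1) (hxy : x ≠ y) : False := by
  have hcx : c * x ∉ H := mixed_notmem' hc hx
  have hcy : c * y ∉ H := mixed_notmem' hc hy
  have adjHH : ∀ p q : G, p ∈ H → q ∈ H → ¬ (Cay G R).Adj p q := by
    intro p q hp hq hadj
    rw [cay_adj hR] at hadj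
    exact ((hdesc _).1 hadj.2).1 (H.mul_mem hq (H.inv_mem hp))
  have adjCC : ∀ p q : G, p ∉ H → q ∉ H → ¬ (Cay G R).Adj p q := by
    intro p q hp hq hadj
    rw [cay_adj hR] at hadj
    exact ((hdesc _).1 hadj.2).1 (hcross p q hp hq)
  have adjMC : ∀ p q : G, p ∈ H → q ∉ H → ((Cay G R).Adj p q ↔ q ≠ c * p) := by
    intro p q hp hq
    have hne : p ≠ q := fun h => hq (h ▸ hp)
    have hqp : q * p⁻¹ ∉ H := mixed_notmem' hq (H.inv_mem hp)
    rw [cay_adj hR]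
    constructor
    · rintro ⟨-, hm⟩
      intro he
      have := ((hdesc _).1 hm).2
      exact this (by rw [he]; group)
    · intro h
      refine ⟨hne, (hdesc _).2 ⟨hqp, fun he => h ?_⟩⟩
      rw [← he]; group
  have hx_cx : x ≠ c * x := fun h => hcx (h ▸ hx)
  have hx_cy : x ≠ c * y := fun h => hcy (h ▸ hx)
  have hy_cx : y ≠ c * x := fun h => hcx (h ▸ hy)
  have hy_cy : y ≠ c * y := fun h => hcy (h ▸ hy)
  have hcxy : c * x ≠ c * y := fun h => hxy (mul_left_cancel h)
  have hcx1 : c * x ≠ 1 := fun h => hc (by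
    rw [eq_inv_of_mul_eq_one_left h]; exact H.inv_mem hx)
  have hcy1 : c * y ≠ 1 := fun h => hc (by
    rw [eq_inv_of_mul_eq_one_left h]; exact H.inv_mem hy)
  refine dblswap_contra hGRR hx1 hy1 hcx1 hcy1
    hxy hcxy hx_cx hx_cy hy_cx hy_cy ?_ ?_ ?_
  · intro v hvx hvy hvcx hvcy
    by_cases hv : v ∈ H
    · constructor
      · exact iff_of_false (adjHH v x hv hx) (adjHH v y hv hy)
      · rw [adjMC v (c * x) hv hcx, adjMC v (c * y) hv hcy]
        exact iff_of_true (fun h => hvx (mul_left_cancel h.symm))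
          (fun h => hvy (mul_left_cancel h.symm))
    · constructor
      · rw [(Cay G R).adj_comm v x, (Cay G R).adj_comm v y,
          adjMC x v hx hv, adjMC y v hy hv]
        exact iff_of_true hvcx hvcy
      · exact iff_of_false (adjCC v (c * x) hv hcx) (adjCC v (c * y) hv hcy)
  · exact iff_of_false (fun h => ((adjMC x (c * x) hx hcx).1 h) rfl)
      (fun h => ((adjMC y (c * y) hy hcy).1 h) rfl)
  · exact iff_of_true ((adjMC x (c * y) hx hcy).2 (fun h => hxy (mul_left_cancel h).symm))
      ((adjMC y (c * x) hy hcx).2 (fun h => hxy (mul_left_cancel h)))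

/-- Structure Z : `R = {d} ∪ (Hᶜ \ {c})`, `H` index two, `c,d` commuting involutions. -/
lemma strZ (hR : CaySet G R) (hGRR : IsCayleyGRR G R) (H : Subgroup G)
    (hcross : ∀ p q : G, p ∉ H → q ∉ H → q * p⁻¹ ∈ H)
    {c d x : G} (hc : c ∉ H) (hd : d ∈ H) (hd1 : d ≠ 1) (hdd : d * d = 1) (hcc : c * c = 1)
    (hcomm : c * d = d * c)
    (hdesc : ∀ v, v ∈ R ↔ (v = d ∨ (v ∉ H ∧ v ≠ c)))
    (hx : x ∈ H) (hx1 : x ≠ 1) (hxd : x ≠ d) : False := by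
  have hdx : d * x ∈ H := H.mul_mem hd hx
  have hcx : c * x ∉ H := mixed_notmem' hc hx
  have hdcx : d * (c * x) ∉ H := mixed_notmem hd hcx
  have hcH : ∀ z : G, z ∈ H → z ≠ c := fun z hz he => hc (he ▸ hz)
  -- adjacency characterizations
  have adjHH : ∀ p q : G, p ∈ H → q ∈ H → ((Cay G R).Adj p q ↔ q = d * p) := by
    intro p q hp hq
    rw [cay_adj hR]
    constructor
    · rintro ⟨-, hm⟩
      rcases (hdesc _).1 hm with h | h
      · rw [← h]; group
      · exact absurd (H.mul_mem hq (H.inv_mem hp)) h.1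
    · intro h
      have hne : p ≠ q := by
        rw [h]
        intro he
        exact hd1 (by rwa [eq_comm, mul_eq_right] at he)
      refine ⟨hne, (hdesc _).2 (Or.inl ?_)⟩
      rw [h]; group
  have adjCC : ∀ p q : G, p ∉ H → q ∉ H → ((Cay G R).Adj p q ↔ q = d * p) := by
    intro p q hp hq
    rw [cay_adj hR]
    constructor
    · rintro ⟨-, hm⟩
      rcases (hdesc _).1 hm with h | h
      · rw [← h]; group
      · exact absurd (hcross p q hp hq) h.1
    · intro h
      have hne : p ≠ q := by
        rw [h]
        intro he
        exact hd1 (by rwa [eq_comm, mul_eq_right] at he)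
      refine ⟨hne, (hdesc _).2 (Or.inl ?_)⟩
      rw [h]; group
  have adjMC : ∀ p q : G, p ∈ H → q ∉ H → ((Cay G R).Adj p q ↔ q ≠ c * p) := by
    intro p q hp hq
    have hne : p ≠ q := fun h => hq (h ▸ hp)
    have hqp : q * p⁻¹ ∉ H := mixed_notmem' hq (H.inv_mem hp)
    rw [cay_adj hR]
    constructor
    · rintro ⟨-, hm⟩
      rcases (hdesc _).1 hm with h | h
      · exact absurd (h ▸ hd) hqp
      · intro he
        exact h.2 (by rw [he]; group)
    · intro h
      refine ⟨hne, (hdesc _).2 (Or.inr ⟨hqp, fun he => h ?_⟩)⟩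
      rw [← he]; group
  -- the four points : x, d*x, c*x, d*(c*x)
  have e1 : x ≠ d * x := fun h => hd1 (by rwa [eq_comm, mul_eq_right] at h)
  have e2 : c * x ≠ d * (c * x) := fun h => hd1 (by rwa [eq_comm, mul_eq_right] at h)
  have e3 : x ≠ c * x := fun h => hcx (h ▸ hx)
  have e4 : x ≠ d * (c * x) := fun h => hdcx (h ▸ hx)
  have e5 : d * x ≠ c * x := fun h => hcx (h ▸ hdx)
  have e6 : d * x ≠ d * (c * x) := fun h => hdcx (h ▸ hdx)
  have n1 : d * x ≠ 1 :=
    fun h => hxd ((eq_inv_of_mul_eq_one_right h).trans (inv_eq_of_mul_eq_one_left hdd))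
  have n2 : c * x ≠ 1 := fun h => hc (by
    rw [eq_inv_of_mul_eq_one_left h]; exact H.inv_mem hx)
  have n3 : d * (c * x) ≠ 1 := fun h => hcx (by
    rw [eq_inv_of_mul_eq_one_right h]; exact H.inv_mem hd)
  have hh : c * (d * x) = d * (c * x) := by
    rw [← mul_assoc, hcomm, mul_assoc]
  refine dblswap_contra hGRR hx1 n1 n2 n3 e1 e2 e3 e4 e5 e6 ?_ ?_ ?_
  · intro v hv1 hv2 hv3 hv4
    by_cases hv : v ∈ H
    · constructor
      · rw [adjHH v x hv hx, adjHH v (d * x) hv hdx]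
        refine iff_of_false (fun h => hv2 ?_) (fun h => hv1 (mul_left_cancel h).symm)
        have : d * x = v := by rw [h, ← mul_assoc, hdd, one_mul]
        exact this.symm
      · rw [adjMC v (c * x) hv hcx, adjMC v (d * (c * x)) hv hdcx]
        refine iff_of_true (fun h => hv1 (mul_left_cancel h).symm) (fun h => hv2 ?_)
        have h2 : c * (d * x) = c * v := hh.trans h
        exact (mul_left_cancel h2).symm
    · constructor
      · rw [(Cay G R).adj_comm v x, (Cay G R).adj_comm v (d * x),
          adjMC x v hx hv, adjMC (d * x) v hdx hv]
        exact iff_of_true hv3 (fun h => hv4 (h.trans hh))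
      · rw [adjCC v (c * x) hv hcx, adjCC v (d * (c * x)) hv hdcx]
        refine iff_of_false (fun h => hv4 ?_) (fun h => hv3 (mul_left_cancel h).symm)
        have : d * (c * x) = v := by rw [h, ← mul_assoc, hdd, one_mul]
        exact this.symm
  · exact iff_of_false (fun h => ((adjMC x (c * x) hx hcx).1 h) rfl)
      (fun h => ((adjMC (d * x) (d * (c * x)) hdx hdcx).1 h) hh.symm)
  · exact iff_of_true ((adjMC x (d * (c * x)) hx hdcx).2 e2.symm)
      ((adjMC (d * x) (c * x) hdx hcx).2 (fun h => e1 (mul_left_cancel h)))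

end Structures

section CoreS3
variable {G : Type*} [Group G] [Finite G]

/-- the exceptional order-6 configuration: `S = {t,c}` with `t,c` involutions. -/
lemma core_s3 {R : Set G} (hR : CaySet G R) (hGRR : IsCayleyGRR G R)
    (hn6 : Nat.card G = 6) {t c : G} (ht1 : t ≠ 1) (hc1 : c ≠ 1) (htcne : t ≠ c)
    (ht2 : t * t = 1) (hcc : c * c = 1) (hStc : Rcompl G R = {t, c}) : False := by
  have hS : CaySet G (Rcompl G R) := Rcompl_caySet hR
  have hGS : IsCayleyGRR G (Rcompl G R) := grr_compl hR hGRR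
  have clS : Subgroup.closure (Rcompl G R) = ⊤ := closure_eq_top hS hGS (by omega)
  have htinv : t⁻¹ = t := inv_eq_of_mul_eq_one_left ht2
  have hcinv : c⁻¹ = c := inv_eq_of_mul_eq_one_left hcc
  -- t and c do not commute
  have htc : t * c ≠ c * t := by
    intro hcm
    have eq4 : t * (t * c) = c := by rw [← mul_assoc, ht2, one_mul]
    have eq5 : c * (t * c) = t := by
      rw [← mul_assoc, ← hcm, mul_assoc, hcc, mul_one]
    have eq6 : (t * c) * t = c := by rw [mul_assoc, ← hcm, eq4]
    have eq7 : (t * c) * c = t := by rw [mul_assoc, hcc, mul_one]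
    have eq8 : (t * c) * (t * c) = 1 := by rw [← mul_assoc, eq6, hcc]
    have hK : ∃ K' : Subgroup G, (K' : Set G) = {1, t, c, t * c} := by
      refine ⟨{ carrier := {1, t, c, t * c}, one_mem' := by simp
               , mul_mem' := ?_, inv_mem' := ?_ }, rfl⟩
      · intro x y hx hy
        simp only [Set.mem_insert_iff, Set.mem_singleton_iff] at hx hy ⊢
        have hcm' : c * t = t * c := hcm.symm
        rcases hx with rfl | rfl | rfl | rfl <;> rcases hy with rfl | rfl | rfl | rfl <;>
          simp [mul_assoc, one_mul, mul_one, ht2, hcc, hcm', eq4, eq5]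
      · intro x hx
        simp only [Set.mem_insert_iff, Set.mem_singleton_iff] at hx ⊢
        rcases hx with rfl | rfl | rfl | rfl
        · simp
        · simp [htinv]
        · simp [hcinv]
        · right; right; right
          rw [mul_inv_rev, htinv, hcinv, hcm]
    obtain ⟨K', hK'⟩ := hK
    have hle : (⊤ : Subgroup G) ≤ K' := by
      rw [← clS]
      apply (Subgroup.closure_le K').2
      rw [hStc, hK']
      intro z hz
      rcases hz with rfl | rfl
      · simp
      · simp
    have hKtop : K' = ⊤ := le_antisymm le_top hle
    have hc6 : ((K' : Set G)).ncard = 6 := by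
      rw [hKtop]
      have : ((⊤ : Subgroup G) : Set G) = Set.univ := by simp
      rw [this, Set.ncard_univ, hn6]
    have hc4 : ({1, t, c, t * c} : Set G).ncard ≤ 4 := by
      apply le_trans (Set.ncard_insert_le _ _)
      have h2 : ({t, c, t * c} : Set G).ncard ≤ 3 := by
        apply le_trans (Set.ncard_insert_le _ _)
        have h3 : ({c, t * c} : Set G).ncard ≤ 2 := by
          apply le_trans (Set.ncard_insert_le _ _)
          simp [Set.ncard_singleton]
        omega
      omega
    rw [hK'] at hc6
    omega
  -- basic inequalities about e := t * c
  have he1 : t * c ≠ 1 := by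
    intro h
    exact htcne ((eq_inv_of_mul_eq_one_left h).trans hcinv)
  have he2 : (t * c) * (t * c) ≠ 1 := by
    intro h
    apply htc
    have h2 : (t * c)⁻¹ = t * c := inv_eq_of_mul_eq_one_left h
    rw [mul_inv_rev, htinv, hcinv] at h2
    exact h2.symm
  set e : G := t * c with hedef
  have ho2 : e ^ 2 ≠ 1 := by rwa [pow_two]
  -- order of e is 3
  have ho : orderOf e = 3 := by
    have hdvd : orderOf e ∣ 6 := by rw [← hn6]; exact orderOf_dvd_natCard e
    have h1 : orderOf e ≠ 1 := fun h => he1 (orderOf_eq_one_iff.1 h)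
    have h2 : orderOf e ≠ 2 := fun h => ho2 (h ▸ pow_orderOf_eq_one e)
    have h6 : orderOf e ≠ 6 := by
      intro h
      have hz : Subgroup.zpowers e = ⊤ :=
        Subgroup.eq_top_of_card_eq _ (by rw [Nat.card_zpowers, h, hn6])
      have htz : t ∈ Subgroup.zpowers e := by rw [hz]; trivial
      have hcz : c ∈ Subgroup.zpowers e := by rw [hz]; trivial
      obtain ⟨i, hi⟩ := Subgroup.mem_zpowers_iff.1 htz
      obtain ⟨j, hj⟩ := Subgroup.mem_zpowers_iff.1 hcz
      have hcom : e ^ i * e ^ j = e ^ j * e ^ i := by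
        rw [← zpow_add, ← zpow_add, add_comm]
      rw [hi, hj] at hcom
      exact htc hcom
    have hle : orderOf e ≤ 6 := Nat.le_of_dvd (by omega) hdvd
    have hpos : 0 < orderOf e := orderOf_pos e
    interval_cases h : orderOf e <;> omega
  -- the subgroup M = <e> of order 3 and index 2
  set M := Subgroup.zpowers e with hMdef
  have hcM3 : Nat.card M = 3 := by rw [hMdef, Nat.card_zpowers, ho]
  have heM : e ∈ M := Subgroup.mem_zpowers e
  have hctM : c * t ∈ M := by
    have h0 : e⁻¹ ∈ M := M.inv_mem heM
    have h1 : e⁻¹ = c * t := by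
      rw [hedef, mul_inv_rev, htinv, hcinv]
    rwa [h1] at h0
  have hct1 : c * t ≠ 1 := fun h =>
    htcne (((eq_inv_of_mul_eq_one_left h).trans htinv).symm)
  have hMset : (M : Set G) = {1, e, c * t} := by
    have hsub : ({1, e, c * t} : Set G) ⊆ (M : Set G) := by
      intro z hz
      rcases hz with rfl | rfl | rfl
      · exact M.one_mem
      · exact heM
      · exact hctM
    have h3 : ({1, e, c * t} : Set G).ncard = 3 := by
      rw [Set.ncard_insert_of_notMem (by
          simp only [Set.mem_insert_iff, Set.mem_singleton_iff]
          push_neg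
          exact ⟨Ne.symm he1, Ne.symm hct1⟩) (Set.toFinite _),
        Set.ncard_insert_of_notMem (by simpa using htc) (Set.toFinite _),
        Set.ncard_singleton]
    exact (Set.eq_of_subset_of_ncard_le hsub
      (by rw [subgroup_set_card, hcM3, h3]) (Set.toFinite _)).symm
  have memM : ∀ z : G, z ∈ M ↔ (z = 1 ∨ z = e ∨ z = c * t) := by
    intro z
    rw [← SetLike.mem_coe, hMset]
    simp [Set.mem_insert_iff]
  -- the extra element w
  set w : G := t * (c * t) with hwdef
  have hw1 : w ≠ 1 := by
    intro h
    have h2 : c * t = t⁻¹ := eq_inv_of_mul_eq_one_right h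
    rw [htinv] at h2
    exact hc1 (mul_eq_right.mp h2)
  have hwe : w ≠ e := by
    intro h
    rw [hwdef, hedef] at h
    exact ht1 (mul_eq_left.mp (mul_left_cancel h))
  have hwct : w ≠ c * t := fun h => ht1 (mul_eq_right.mp h)
  have hwM : w ∉ M := by
    intro h
    rcases (memM w).1 h with h | h | h
    · exact hw1 h
    · exact hwe h
    · exact hwct h
  have hidx : M.index = 2 := index_two_of_card (by rw [hcM3, hn6])
  have hcross := fun p q hp hq => cross_mul hidx (p := p) (q := q) hp hq
  have htM : t ∉ M := by
    intro h
    rcases (memM t).1 h with h | h | h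
    · exact ht1 h
    · exact hc1 (mul_eq_left.mp (h.symm : t * c = t))
    · exact hc1 (mul_eq_right.mp h.symm)
  have memR : ∀ x : G, x ≠ 1 → x ≠ t → x ≠ c → x ∈ R := by
    intro x h1 h2 h3
    rcases tricho (R := R) x with h | h | h
    · exact absurd h h1
    · exact h
    · rw [hStc] at h
      rcases h with rfl | rfl
      · exact absurd rfl h2
      · exact absurd rfl h3
  have hdesc : ∀ v, v ∈ R ↔ ((v ∈ M ∧ v ≠ 1) ∨ v = w) := by
    intro v
    constructor
    · intro hvR
      have hv1 : v ≠ 1 := mem_ne_one hR hvR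
      have hvRc : v ∉ Rcompl G R := fun h => (mem_Rcompl.1 h).2 hvR
      rw [hStc] at hvRc
      simp only [Set.mem_insert_iff, Set.mem_singleton_iff] at hvRc
      push_neg at hvRc
      obtain ⟨hvt, hvc⟩ := hvRc
      by_cases hvM : v ∈ M
      · exact Or.inl ⟨hvM, hv1⟩
      · refine Or.inr ?_
        have hcr : v * t⁻¹ ∈ M := hcross t v htM hvM
        rw [htinv] at hcr
        rcases (memM _).1 hcr with h | h | h
        · exact absurd ((mul_eq_one_iff_eq_inv.1 h).trans htinv) hvt
        · rw [hwdef, ← mul_assoc, ← hedef]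
          exact mul_inv_eq_iff_eq_mul.1 (by rw [htinv]; exact h)
        · exact absurd (mul_right_cancel h) hvc
    · rintro (⟨hvM, hv1⟩ | rfl)
      · rcases (memM v).1 hvM with h | h | h
        · exact absurd h hv1
        · subst h
          refine memR _ he1 ?_ ?_
          · rw [hedef]
            exact fun h => hc1 (mul_eq_left.mp h)
          · rw [hedef]
            exact fun h => ht1 (mul_eq_right.mp h)
        · subst h
          refine memR _ hct1 ?_ ?_
          · exact fun h => hc1 (mul_eq_right.mp h)
          · exact fun h => ht1 (mul_eq_left.mp h)
      · refine memR _ hw1 ?_ ?_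
        · intro h
          exact hct1 (mul_eq_left.mp h)
        · intro h
          apply htc
          have h2 : (t * c) * t = c := by rw [mul_assoc]; exact h
          have h3 : t * c = c * t⁻¹ := by
            rw [eq_mul_inv_iff_mul_eq]
            exact h2
          rw [htinv] at h3
          exact h3
  exact strX hR hGRR M hcross hwM hdesc heM hctM he1 hct1 htc

end CoreS3

section Core
variable {G : Type*} [Group G] [Finite G]

lemma core {R : Set G} (hR : CaySet G R) (hGRR : IsCayleyGRR G R)
    (hn : 2 < Nat.card G)
    (hH : Subgroup.closure (Rcompl G R \ cayIso G (Rcompl G R)) ≠ ⊤)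
    (hA : (cayIso G R).Nonempty)
    (hB1 : (cayIso G (Rcompl G R)).ncard ≤ 1) : False := by
  set S := Rcompl G R with hSdef
  have hS : CaySet G S := Rcompl_caySet hR
  have hGS : IsCayleyGRR G S := grr_compl hR hGRR
  have clR : Subgroup.closure R = ⊤ := closure_eq_top hR hGRR hn
  have clS : Subgroup.closure S = ⊤ := closure_eq_top hS hGS hn
  -- B is a single involution c
  have hBne : (cayIso G S).Nonempty := by
    by_contra h
    rw [Set.not_nonempty_iff_eq_empty] at h
    apply hH
    rw [h, Set.diff_empty]
    exact clS
  obtain ⟨c, hcB⟩ := hBne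
  have hsing : ∀ x ∈ cayIso G S, x = c := by
    intro x hx
    by_contra hne
    have : 1 < (cayIso G S).ncard :=
      (Set.one_lt_ncard_iff (Set.toFinite _)).2 ⟨x, c, hx, hcB, hne⟩
    omega
  have hBeq : cayIso G S = {c} := Set.eq_singleton_iff_unique_mem.2 ⟨hcB, hsing⟩
  have hcS : c ∈ S := hcB.1
  have hc1 : c ≠ 1 := mem_ne_one hS hcS
  have hcinv : c⁻¹ = c := hsing _ (cayIso_inv hS hcB)
  have hcc : c * c = 1 := by
    have h0 : c * c⁻¹ = 1 := mul_inv_cancel c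
    rwa [hcinv] at h0
  have hcR : c ∉ R := (mem_Rcompl.1 hcS).2
  have ho : orderOf c = 2 := orderOf_eq_prime (by rw [pow_two]; exact hcc) hc1
  have heven : 2 ∣ Nat.card G := ho ▸ orderOf_dvd_natCard c
  -- the subgroup H
  set H := Subgroup.closure (S \ {c}) with hHdef
  have hH2 : H ≠ ⊤ := by rw [hHdef, ← hBeq]; exact hH
  have hSsub : ∀ x ∈ S, x ≠ c → x ∈ H := fun x hx hxc => Subgroup.subset_closure ⟨hx, hxc⟩
  have hcH : c ∉ H := by
    intro hcH
    apply hH2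
    rw [eq_top_iff, ← clS]
    refine (Subgroup.closure_le H).2 (fun x hx => ?_)
    by_cases hxc : x = c
    · rwa [hxc]
    · exact hSsub x hx hxc
  -- counting
  obtain ⟨a, haA⟩ := hA
  have haR : a ∈ R := haA.1
  have hiso : ∀ u ∈ R, u * a⁻¹ ∉ R := ((mem_cayIso hR).1 haA).2
  have hns : Nat.card G = 1 + R.ncard + S.ncard := card_parts hR
  have hrs : R.ncard ≤ 1 + S.ncard := by
    calc R.ncard = (Rt R a).ncard := (ncard_Rt R a).symm
      _ ≤ ({1} ∪ S : Set G).ncard :=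
          Set.ncard_le_ncard (iso_Rt_sub hR haA) (Set.toFinite _)
      _ = 1 + S.ncard := ncard_one_union hS.one
  have hpos : 0 < Nat.card H := Nat.card_pos
  have hsh : S.ncard ≤ Nat.card H := by
    have hsub2 : S ⊆ (((H : Set G)) \ {1}) ∪ {c} := by
      intro x hx
      by_cases hxc : x = c
      · exact Or.inr (by simp [hxc])
      · exact Or.inl ⟨hSsub x hx hxc, by simpa using mem_ne_one hS hx⟩
    have e1 : (((H : Set G)) \ {1}).ncard = Nat.card H - 1 := by
      rw [Set.ncard_diff_singleton_of_mem H.one_mem, subgroup_set_card]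
    calc S.ncard ≤ ((((H : Set G)) \ {1}) ∪ {c}).ncard :=
          Set.ncard_le_ncard hsub2 (Set.toFinite _)
      _ ≤ (((H : Set G)) \ {1}).ncard + ({c} : Set G).ncard := Set.ncard_union_le _ _
      _ = Nat.card H - 1 + 1 := by rw [e1, Set.ncard_singleton]
      _ ≤ Nat.card H := by omega
  have hdvd : Nat.card H ∣ Nat.card G := Subgroup.card_subgroup_dvd_card H
  have hlt : Nat.card H < Nat.card G := proper_card_lt hH2
  have h2h : 2 * Nat.card H ≤ Nat.card G := by
    obtain ⟨m, hm⟩ := hdvd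
    have hm0 : m ≠ 0 := by rintro rfl; rw [mul_zero] at hm; omega
    have hm1 : m ≠ 1 := by rintro rfl; rw [mul_one] at hm; omega
    calc 2 * Nat.card H = Nat.card H * 2 := by ring
      _ ≤ Nat.card H * m := Nat.mul_le_mul_left _ (by omega)
      _ = Nat.card G := hm.symm
  have hcase : Nat.card G = 2 * Nat.card H ∨ Nat.card G = 2 * Nat.card H + 2 := by omega
  rcases hcase with hcase | hcase
  · -- main case : H has index 2
    have hidx : H.index = 2 := index_two_of_card hcase.symm
    have hcross : ∀ p q : G, p ∉ H → q ∉ H → q * p⁻¹ ∈ H :=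
      fun p q hp hq => cross_mul hidx hp hq
    have hRdesc0 : ∀ x : G, x ∉ H → x ≠ c → x ∈ R := by
      intro x hxH hxc
      rcases tricho (R := R) x with h | h | h
      · exact absurd (h ▸ H.one_mem) hxH
      · exact h
      · exact absurd (hSsub x h hxc) hxH
    have e0 : R ∩ ((H : Set G))ᶜ = ((H : Set G))ᶜ \ {c} := by
      ext x
      constructor
      · rintro ⟨hxR, hxH⟩
        exact ⟨hxH, fun he => hcR ((Set.mem_singleton_iff.1 he) ▸ hxR)⟩
      · rintro ⟨h1, h2⟩
        exact ⟨hRdesc0 x h1 (by simpa using h2), h1⟩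
    have hcompl_card : (((H : Set G))ᶜ).ncard = Nat.card H := by
      have h0 := Set.ncard_add_ncard_compl ((H : Set G))
      rw [subgroup_set_card] at h0
      omega
    have e1 : (R ∩ ((H : Set G))ᶜ).ncard = Nat.card H - 1 := by
      rw [e0, Set.ncard_diff_singleton_of_mem (show c ∈ ((H : Set G))ᶜ by simpa using hcH), hcompl_card]
    have e2 : (R ∩ (H : Set G)).ncard + (R ∩ ((H : Set G))ᶜ).ncard = R.ncard := by
      rw [← Set.ncard_union_eq (by
          refine Set.disjoint_left.2 ?_
          rintro x ⟨-, h1⟩ ⟨-, h2⟩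
          exact h2 h1) (Set.toFinite _) (Set.toFinite _), Set.inter_union_compl]
    have hRH1 : (R ∩ (H : Set G)).ncard ≤ 1 := by omega
    by_cases hRH : R ∩ (H : Set G) = ∅
    · -- R = Hᶜ \ {c} : structure Y
      have hdesc : ∀ v, v ∈ R ↔ (v ∉ H ∧ v ≠ c) := by
        intro v
        constructor
        · intro hv
          refine ⟨fun hvH => ?_, fun he => hcR (he ▸ hv)⟩
          rw [Set.eq_empty_iff_forall_notMem] at hRH
          exact hRH v ⟨hv, hvH⟩
        · rintro ⟨h1, h2⟩
          exact hRdesc0 v h1 h2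
      by_cases h3 : 3 ≤ Nat.card H
      · have hd1 : 1 < (((H : Set G)) \ {1}).ncard := by
          rw [Set.ncard_diff_singleton_of_mem H.one_mem, subgroup_set_card]
          omega
        obtain ⟨x, y, hx, hy, hxy⟩ := (Set.one_lt_ncard_iff (Set.toFinite _)).1 hd1
        exact strY hR hGRR H hcross hcH hdesc hx.1 hy.1
          (by simpa using hx.2) (by simpa using hy.2) hxy
      · -- n = 4 : R is a single involution generating G
        have hρ : R.ncard = 1 := by
          rw [Set.eq_empty_iff_forall_notMem] at hRH
          have : (R ∩ (H : Set G)).ncard = 0 := by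
            rw [Set.ncard_eq_zero (Set.toFinite _)]
            rw [Set.eq_empty_iff_forall_notMem]
            exact hRH
          omega
        obtain ⟨z, hz⟩ := Set.ncard_eq_one.1 hρ
        have haz : a = z := by
          have : a ∈ ({z} : Set G) := hz ▸ haR
          simpa using this
        have hzR : z ∈ R := by rw [hz]; rfl
        have hzinv : z⁻¹ = z := by
          have : z⁻¹ ∈ ({z} : Set G) := hz ▸ hR.inv z hzR
          simpa using this
        have hz2 : z * z = 1 := by
          have h0 : z * z⁻¹ = 1 := mul_inv_cancel z
          rwa [hzinv] at h0
        have hzt : Subgroup.zpowers z = ⊤ := by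
          refine le_antisymm le_top ?_
          rw [← clR]
          refine (Subgroup.closure_le _).2 (fun x hx => ?_)
          have : x = z := by rw [hz] at hx; simpa using hx
          rw [this]
          exact Subgroup.mem_zpowers z
        have hoz : orderOf z = Nat.card G := by
          rw [← Nat.card_zpowers, hzt]
          exact Subgroup.card_top
        have hoz2 : orderOf z ∣ 2 := orderOf_dvd_of_pow_eq_one (by rw [pow_two]; exact hz2)
        have := Nat.le_of_dvd (by norm_num) hoz2
        omega
    · -- R ∩ H = {d} : structure Z or n = 4 twins
      have hone : (R ∩ (H : Set G)).ncard = 1 := by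
        have h0 : (R ∩ (H : Set G)).Nonempty := Set.nonempty_iff_ne_empty.2 hRH
        have := (Set.ncard_pos (Set.toFinite _)).2 h0
        omega
      obtain ⟨d, hd⟩ := Set.ncard_eq_one.1 hone
      have hdRH : d ∈ R ∧ d ∈ H := by
        have : d ∈ R ∩ (H : Set G) := by rw [hd]; rfl
        exact ⟨this.1, this.2⟩
      have hd1 : d ≠ 1 := mem_ne_one hR hdRH.1
      have hdinv : d⁻¹ = d := by
        have : d⁻¹ ∈ R ∩ (H : Set G) := ⟨hR.inv d hdRH.1, H.inv_mem hdRH.2⟩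
        rw [hd] at this
        simpa using this
      have hdd : d * d = 1 := by
        have h0 : d * d⁻¹ = 1 := mul_inv_cancel d
        rwa [hdinv] at h0
      have hdesc : ∀ v, v ∈ R ↔ (v = d ∨ (v ∉ H ∧ v ≠ c)) := by
        intro v
        constructor
        · intro hv
          by_cases hvH : v ∈ H
          · left
            have : v ∈ R ∩ (H : Set G) := ⟨hv, hvH⟩
            rw [hd] at this
            simpa using this
          · exact Or.inr ⟨hvH, fun he => hcR (he ▸ hv)⟩
        · rintro (rfl | ⟨h1, h2⟩)
          · exact hdRH.1
          · exact hRdesc0 v h1 h2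
      by_cases h3 : 3 ≤ Nat.card H
      · -- structure Z
        have hq : ∃ q : G, q ∉ H ∧ q ≠ c ∧ q ≠ c * d := by
          have hsub3 : ((H : Set G))ᶜ ⊆ (((H : Set G))ᶜ \ {c, c * d}) ∪ {c, c * d} := by
            intro x hx
            by_cases hxm : x ∈ ({c, c * d} : Set G)
            · exact Or.inr hxm
            · exact Or.inl ⟨hx, hxm⟩
          have hb1 : (((H : Set G))ᶜ).ncard ≤
              (((H : Set G))ᶜ \ {c, c * d}).ncard + ({c, c * d} : Set G).ncard :=
            le_trans (Set.ncard_le_ncard hsub3 (Set.toFinite _)) (Set.ncard_union_le _ _)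
          have hb2 : ({c, c * d} : Set G).ncard ≤ 2 := by
            apply le_trans (Set.ncard_insert_le _ _)
            simp
          have hb3 : 0 < (((H : Set G))ᶜ \ {c, c * d}).ncard := by
            rw [hcompl_card] at hb1
            omega
          obtain ⟨q, hq⟩ := (Set.ncard_pos (Set.toFinite _)).1 hb3 |>.imp (fun q h => h)
          refine ⟨q, hq.1, ?_, ?_⟩
          · exact fun he => hq.2 (by simp [he])
          · exact fun he => hq.2 (by simp [he])
        obtain ⟨q, hqH, hqc, hqcd⟩ := hq
        have hqR : q ∈ R := hRdesc0 q hqH hqc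
        have had : a ≠ d := by
          intro he
          have hu : q * d ∈ R := by
            refine (hdesc _).2 (Or.inr ⟨mixed_notmem' hqH hdRH.2, fun h => hqcd ?_⟩)
            have : q = c * d⁻¹ := eq_mul_inv_of_mul_eq h
            rwa [hdinv] at this
          have h0 := hiso (q * d) hu
          rw [he] at h0
          apply h0
          rw [hdinv, mul_assoc, hdd, mul_one]
          exact hqR
        have haH : a ∉ H ∧ a ≠ c := by
          rcases (hdesc a).1 haR with h | h
          · exact absurd h had
          · exact h
        have hacd : a = c * d := by
          have h1 : d * a⁻¹ ∉ R := hiso d hdRH.1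
          have h2 : d * a⁻¹ ∉ H :=
            mixed_notmem hdRH.2 (fun h => haH.1 (by rwa [H.inv_mem_iff] at h))
          have h3 : d * a⁻¹ = c := by
            by_contra hne
            exact h1 ((hdesc _).2 (Or.inr ⟨h2, hne⟩))
          have h4 : a⁻¹ = d⁻¹ * c := by rw [eq_inv_mul_iff_mul_eq]; exact h3
          calc a = (a⁻¹)⁻¹ := (inv_inv a).symm
            _ = (d⁻¹ * c)⁻¹ := by rw [h4]
            _ = c⁻¹ * d := by rw [mul_inv_rev, inv_inv]
            _ = c * d := by rw [hcinv]
        have hadc : a = d * c := by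
          by_contra hne
          have hda : d * a ∈ R := by
            refine (hdesc _).2 (Or.inr ⟨mixed_notmem hdRH.2 haH.1, fun h => hne ?_⟩)
            have h4 : a = d⁻¹ * c := by rw [eq_inv_mul_iff_mul_eq]; exact h
            rwa [hdinv] at h4
          have h0 := hiso (d * a) hda
          apply h0
          rw [mul_inv_cancel_right]
          exact hdRH.1
        have hcomm : c * d = d * c := hacd.symm.trans hadc
        have hx : ∃ x : G, x ∈ H ∧ x ≠ 1 ∧ x ≠ d := by
          have hsub3 : (H : Set G) ⊆ (((H : Set G)) \ {1, d}) ∪ {1, d} := by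
            intro z hz
            by_cases hzm : z ∈ ({1, d} : Set G)
            · exact Or.inr hzm
            · exact Or.inl ⟨hz, hzm⟩
          have hb1 : ((H : Set G)).ncard ≤
              (((H : Set G)) \ {1, d}).ncard + ({1, d} : Set G).ncard :=
            le_trans (Set.ncard_le_ncard hsub3 (Set.toFinite _)) (Set.ncard_union_le _ _)
          have hb2 : ({1, d} : Set G).ncard ≤ 2 := by
            apply le_trans (Set.ncard_insert_le _ _)
            simp
          have hb3 : 0 < (((H : Set G)) \ {1, d}).ncard := by
            rw [subgroup_set_card] at hb1
            omega
          obtain ⟨x, hx⟩ := (Set.ncard_pos (Set.toFinite _)).1 hb3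
          refine ⟨x, hx.1, ?_, ?_⟩
          · exact fun he => hx.2 (by simp [he])
          · exact fun he => hx.2 (by simp [he])
        obtain ⟨x, hxH, hx1, hxd⟩ := hx
        exact strZ hR hGRR H hcross hcH hdRH.2 hd1 hdd hcc hcomm hdesc hxH hx1 hxd
      · -- n = 4 : twins d and q
        have hHset : ∀ z ∈ H, z = 1 ∨ z = d := by
          intro z hz
          by_contra hcon
          push_neg at hcon
          have hsub3 : ({1, d, z} : Set G) ⊆ (H : Set G) := by
            intro u hu
            rcases hu with rfl | rfl | rfl
            · exact H.one_mem
            · exact hdRH.2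
            · exact hz
          have h3' : ({1, d, z} : Set G).ncard = 3 := by
            rw [Set.ncard_insert_of_notMem (by
                simp only [Set.mem_insert_iff, Set.mem_singleton_iff]
                push_neg
                exact ⟨Ne.symm hd1, Ne.symm hcon.1⟩) (Set.toFinite _),
              Set.ncard_insert_of_notMem (by simpa using (Ne.symm hcon.2)) (Set.toFinite _),
              Set.ncard_singleton]
          have := Set.ncard_le_ncard hsub3 (Set.toFinite _)
          rw [h3', subgroup_set_card] at this
          omega
        have e1' : (R ∩ ((H : Set G))ᶜ).ncard = 1 := by omega
        obtain ⟨q, hq⟩ := Set.ncard_eq_one.1 e1'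
        have hqRH : q ∈ R ∧ q ∉ H := by
          have : q ∈ R ∩ ((H : Set G))ᶜ := by rw [hq]; rfl
          exact ⟨this.1, this.2⟩
        have hq1 : q ≠ 1 := mem_ne_one hR hqRH.1
        have hdq : d ≠ q := fun h => hqRH.2 (h ▸ hdRH.2)
        refine swap_contra hGRR hd1 hq1 hdq ?_
        intro w hwd hwq
        rw [cay_adj hR, cay_adj hR]
        by_cases hwH : w ∈ H
        · rcases hHset w hwH with rfl | rfl
          · simp only [inv_one, mul_one]
            exact iff_of_true ⟨Ne.symm hd1, hdRH.1⟩ ⟨Ne.symm hq1, hqRH.1⟩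
          · exact absurd rfl hwd
        · by_cases hwc : w = c
          · subst hwc
            have t1 : d * w⁻¹ ∈ R := by
              rw [hcinv]
              refine (hdesc _).2 (Or.inr ⟨mixed_notmem hdRH.2 hcH,
                fun h => hd1 (mul_eq_right.mp h)⟩)
            have t2 : q * w⁻¹ ∈ R := by
              have hm : q * w⁻¹ ∈ H := hcross w q hcH hqRH.2
              rcases hHset _ hm with h | h
              · exact absurd (mul_inv_eq_one.1 h) (fun he => hcR (he ▸ hqRH.1))
              · rw [h]; exact hdRH.1
            exact iff_of_true ⟨fun h => hcH (h ▸ hdRH.2), t1⟩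
              ⟨fun h => hcR (h ▸ hqRH.1), t2⟩
          · -- w ∈ R ∩ Hᶜ = {q}, contradiction
            have : w ∈ R ∩ ((H : Set G))ᶜ := ⟨hRdesc0 w hwH hwc, hwH⟩
            rw [hq] at this
            exact absurd (by simpa using this) hwq
  · -- n = 2h + 2 : h ∈ {1, 2}
    have hd2 : Nat.card H = 1 ∨ Nat.card H = 2 := by
      have h0 : Nat.card H ∣ 2 * Nat.card H + 2 := hcase ▸ hdvd
      have h1 : Nat.card H ∣ 2 * Nat.card H := ⟨2, by ring⟩
      have h2 : Nat.card H ∣ 2 := (Nat.dvd_add_right h1).1 h0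
      have := Nat.le_of_dvd (by norm_num) h2
      omega
    rcases hd2 with hcard | hcard
    · -- h = 1, n = 4 : S ⊆ {c}, but <S> = G of order 4
      have hone : ∀ x ∈ H, x = 1 := by
        intro x hx
        have hsub1 : ({1} : Set G) ⊆ (H : Set G) := by simp [H.one_mem]
        have : ({1} : Set G) = (H : Set G) :=
          Set.eq_of_subset_of_ncard_le hsub1
            (by rw [subgroup_set_card, hcard, Set.ncard_singleton]) (Set.toFinite _)
        have hx' : x ∈ (H : Set G) := hx
        rw [← this] at hx'
        simpa using hx'
      have hzt : Subgroup.zpowers c = ⊤ := by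
        refine le_antisymm le_top ?_
        rw [← clS]
        refine (Subgroup.closure_le _).2 (fun x hx => ?_)
        by_cases hxc : x = c
        · rw [hxc]; exact Subgroup.mem_zpowers c
        · exact absurd (hone x (hSsub x hx hxc)) (mem_ne_one hS hx)
      have hoc : orderOf c = Nat.card G := by
        rw [← Nat.card_zpowers, hzt]
        exact Subgroup.card_top
      omega
    · -- h = 2, n = 6 : the S3 case
      have hd1 : (((H : Set G)) \ {1}).ncard = 1 := by
        rw [Set.ncard_diff_singleton_of_mem H.one_mem, subgroup_set_card,
          hcard]
      obtain ⟨t, htset⟩ := Set.ncard_eq_one.1 hd1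
      have htH : t ∈ H ∧ t ≠ 1 := by
        have : t ∈ ((H : Set G)) \ {1} := by rw [htset]; rfl
        exact ⟨this.1, by simpa using this.2⟩
      have hmemH : ∀ z ∈ H, z = 1 ∨ z = t := by
        intro z hz
        by_cases hz1 : z = 1
        · exact Or.inl hz1
        · right
          have : z ∈ ((H : Set G)) \ {1} := ⟨hz, by simpa using hz1⟩
          rw [htset] at this
          simpa using this
      have htinv : t⁻¹ = t := by
        rcases hmemH t⁻¹ (H.inv_mem htH.1) with h | h
        · exact absurd (by simpa using h) htH.2
        · exact h
      have ht2 : t * t = 1 := by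
        have h0 : t * t⁻¹ = 1 := mul_inv_cancel t
        rwa [htinv] at h0
      -- S = {t, c}
      have hs2 : S.ncard = 2 := by omega
      have hsc1 : (S \ {c}).ncard = 1 := by
        rw [Set.ncard_diff_singleton_of_mem hcS, hs2]
      obtain ⟨t', ht'⟩ := Set.ncard_eq_one.1 hsc1
      have ht'S : t' ∈ S ∧ t' ≠ c := by
        have : t' ∈ S \ {c} := by rw [ht']; rfl
        exact ⟨this.1, by simpa using this.2⟩
      have ht't : t' = t := by
        rcases hmemH t' (hSsub t' ht'S.1 ht'S.2) with h | h
        · exact absurd h (mem_ne_one hS ht'S.1)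
        · exact h
      have htS : t ∈ S := ht't ▸ ht'S.1
      have hSeq : S = {t, c} := by
        ext x
        constructor
        · intro hx
          by_cases hxc : x = c
          · exact Or.inr hxc
          · left
            have : x ∈ S \ {c} := ⟨hx, by simpa using hxc⟩
            rw [ht'] at this
            have : x = t' := by simpa using this
            exact this.trans ht't
        · rintro (rfl | rfl)
          · exact htS
          · exact hcS
      have htc : t ≠ c := fun h => hcH (h ▸ htH.1)
      exact core_s3 hR hGRR (by omega) htH.2 hc1 htc ht2 hcc hSeq

end Core

section Main
variable {G : Type*} [Group G] [Finite G]

lemma main_lemma {R : Set G} (hR : CaySet G R) (hGRR : IsCayleyGRR G R)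
    (hn : 2 < Nat.card G)
    (hHS : Subgroup.closure (Rcompl G R \ cayIso G (Rcompl G R)) ≠ ⊤) :
    Subgroup.closure (R \ cayIso G R) = ⊤ ∧ (cayIso G R).ncard ≤ 1 := by
  have hS : CaySet G (Rcompl G R) := Rcompl_caySet hR
  have hGS : IsCayleyGRR G (Rcompl G R) := grr_compl hR hGRR
  have hSS : Rcompl G (Rcompl G R) = R := Rcompl_Rcompl hR
  have p1 := part1 hR hGRR
  have hBne : (cayIso G (Rcompl G R)).Nonempty := by
    by_contra h
    rw [Set.not_nonempty_iff_eq_empty] at h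
    apply hHS
    rw [h, Set.diff_empty]
    exact closure_eq_top hS hGS hn
  have hA1 : (cayIso G R).ncard ≤ 1 := by
    by_contra h
    push_neg at h
    have hB1 : (cayIso G (Rcompl G R)).ncard ≤ 1 := by
      rcases p1 with h' | h'
      · omega
      · exact h'
    have hAne : (cayIso G R).Nonempty := by
      rw [← Set.ncard_pos (Set.toFinite _)]
      omega
    exact core hR hGRR hn hHS hAne hB1
  refine ⟨?_, hA1⟩
  by_contra hHR
  have hAne : (cayIso G R).Nonempty := by
    by_contra h
    rw [Set.not_nonempty_iff_eq_empty] at h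
    apply hHR
    rw [h, Set.diff_empty]
    exact closure_eq_top hR hGRR hn
  rcases p1 with h | h
  · refine core hS hGS hn ?_ hBne ?_
    · rw [hSS]; exact hHR
    · rw [hSS]; exact h
  · exact core hR hGRR hn hHS hAne h

end Main

/-- if `Cay(G,R)` is a GRR then `|Γ[R]_I| ≤ 1` or `|Γᶜ[Rᶜ]_I| ≤ 1`;
moreover, when `|G| > 2`, either `G = ⟨R ∖ Γ[R]_I⟩` and `|Γ[R]_I| ≤ 1`, or
`G = ⟨Rᶜ ∖ Γᶜ[Rᶜ]_I⟩` and `|Γᶜ[Rᶜ]_I| ≤ 1`. -/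
theorem statement_2 (G : Type*) [Group G] [Finite G] (R : Set G)
    (h1 : (1 : G) ∉ R) (hinv : ∀ r ∈ R, r⁻¹ ∈ R)
    (hGRR : IsCayleyGRR G R) :
    ((cayIso G R).ncard ≤ 1 ∨ (cayIso G (Rcompl G R)).ncard ≤ 1) ∧
    (2 < Nat.card G →
      (Subgroup.closure (R \ cayIso G R) = ⊤ ∧ (cayIso G R).ncard ≤ 1) ∨
      (Subgroup.closure (Rcompl G R \ cayIso G (Rcompl G R)) = ⊤ ∧
        (cayIso G (Rcompl G R)).ncard ≤ 1)) := by
  have hR : CaySet G R := ⟨h1, hinv⟩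
  have hS : CaySet G (Rcompl G R) := Rcompl_caySet hR
  have hGS : IsCayleyGRR G (Rcompl G R) := grr_compl hR hGRR
  have hSS : Rcompl G (Rcompl G R) = R := Rcompl_Rcompl hR
  refine ⟨part1 hR hGRR, fun hn => ?_⟩
  by_cases hStop : Subgroup.closure (Rcompl G R \ cayIso G (Rcompl G R)) = ⊤
  · by_cases hRtop : Subgroup.closure (R \ cayIso G R) = ⊤
    · rcases part1 hR hGRR with h | h
      · exact Or.inl ⟨hRtop, h⟩
      · exact Or.inr ⟨hStop, h⟩
    · right
      have := main_lemma hS hGS hn (by rw [hSS]; exact hRtop)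
      exact this
  · exact Or.inl (main_lemma hR hGRR hn hStop)
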